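/- arXiv:1711.05786 — 6 statements merged into one kernel-verified Lean document; each statement's English description precedes it below -/
import Mathlib

section
/- For the Legendre polynomials defined by p_0 = 1, p_1 = x, and the recursion (n+1) p_{n+1}(x) = (2n+1) x p_n(x) - n p_{n-1}(x), one has the orthogonality relation ∫_{-1}^{1} p_m(x) p_n(x) dx = (2/(2n+1)) δ_{mn}. -/
open Polynomial MeasureTheory intervalIntegral

noncomputable def Leg : ℕ → Polynomial ℝ
  | 0 => 1
  | 1 => X
  | (n+2) => C ((2*(n:ℝ)+3)/((n:ℝ)+2)) * (X * Leg (n+1)) - C (((n:ℝ)+1)/((n:ℝ)+2)) * Leg n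

lemma Leg_zero : Leg 0 = 1 := rfl
lemma Leg_one : Leg 1 = X := rfl

lemma Leg_rec (n : ℕ) :
    ((n:Polynomial ℝ)+2) * Leg (n+2)
      = (2*(n:Polynomial ℝ)+3) * (X * Leg (n+1)) - ((n:Polynomial ℝ)+1) * Leg n := by
  have h2 : ((n:ℝ)+2) ≠ 0 := by positivity
  have e1 : ((n:Polynomial ℝ)+2) * C ((2*(n:ℝ)+3)/((n:ℝ)+2)) = 2*(n:Polynomial ℝ)+3 := by
    rw [show ((n:Polynomial ℝ)+2) = C ((n:ℝ)+2) by simp [map_add, map_ofNat], ← C_mul]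
    rw [show ((n:ℝ)+2) * ((2*(n:ℝ)+3)/((n:ℝ)+2)) = 2*(n:ℝ)+3 from by field_simp]
    simp [map_add, map_ofNat, map_mul]
  have e2 : ((n:Polynomial ℝ)+2) * C (((n:ℝ)+1)/((n:ℝ)+2)) = (n:Polynomial ℝ)+1 := by
    rw [show ((n:Polynomial ℝ)+2) = C ((n:ℝ)+2) by simp [map_add, map_ofNat], ← C_mul]
    rw [show ((n:ℝ)+2) * (((n:ℝ)+1)/((n:ℝ)+2)) = (n:ℝ)+1 from by field_simp]
    simp [map_add, map_ofNat]
  show ((n:Polynomial ℝ)+2) * (C ((2*(n:ℝ)+3)/((n:ℝ)+2)) * (X * Leg (n+1))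
      - C (((n:ℝ)+1)/((n:ℝ)+2)) * Leg n) = _
  linear_combination (X * Leg (n+1)) * e1 - (Leg n) * e2

lemma Leg_bonnet (n : ℕ) :
    derivative (Leg (n+1)) = ((n:Polynomial ℝ)+1) * Leg n + X * derivative (Leg n)
    ∧ X * derivative (Leg (n+1)) - derivative (Leg n) = ((n:Polynomial ℝ)+1) * Leg (n+1) := by
  induction n with
  | zero => constructor <;> simp [Leg]
  | succ n ih =>
    obtain ⟨A, B⟩ := ih
    have hC : ((n:Polynomial ℝ)+2) ≠ 0 := by
      intro h
      have := congrArg (eval 0) h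
      simp at this
      linarith [this, Nat.cast_nonneg (α := ℝ) n]
    have dPrec := congrArg derivative (Leg_rec n)
    simp only [derivative_mul, derivative_sub, derivative_add, derivative_natCast,
      derivative_ofNat, derivative_X, zero_mul, one_mul, zero_add, mul_one, add_zero,
      mul_zero, derivative_one] at dPrec
    constructor
    · push_cast
      apply mul_left_cancel₀ hC
      linear_combination dPrec + ((n:Polynomial ℝ)+1) * B
    · push_cast
      apply mul_left_cancel₀ hC
      linear_combination X * dPrec + (2*(n:Polynomial ℝ)+3) * X * B
        - ((n:Polynomial ℝ)+2) * A - ((n:Polynomial ℝ)+2) * Leg_rec n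


lemma Leg_SL (n : ℕ) :
    (1 - X^2) * derivative (derivative (Leg n)) - 2 * X * derivative (Leg n)
      = -((n:Polynomial ℝ)*((n:Polynomial ℝ)+1)) * Leg n := by
  cases n with
  | zero => simp [Leg_zero]
  | succ n =>
    obtain ⟨A, B⟩ := Leg_bonnet n
    have Cn : (1 - X^2) * derivative (Leg (n+1))
        = ((n:Polynomial ℝ)+1) * (Leg n - X * Leg (n+1)) := by
      linear_combination A - X * B
    have dCn := congrArg derivative Cn
    simp only [derivative_mul, derivative_sub, derivative_add, derivative_natCast,
      derivative_ofNat, derivative_X, derivative_one, derivative_X_pow, zero_mul, one_mul,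
      zero_add, mul_one, add_zero, mul_zero, zero_sub, Nat.cast_ofNat, pow_one, map_ofNat] at dCn
    push_cast
    linear_combination dCn - ((n:Polynomial ℝ)+1) * B

lemma Leg_wron (m n : ℕ) :
    derivative ((1 - X^2) * (derivative (Leg m) * Leg n - Leg m * derivative (Leg n)))
      = ((n:Polynomial ℝ)*((n:Polynomial ℝ)+1) - (m:Polynomial ℝ)*((m:Polynomial ℝ)+1))
        * (Leg m * Leg n) := by
  have hm := Leg_SL m
  have hn := Leg_SL n
  simp only [derivative_mul, derivative_sub, derivative_X, derivative_one,
    derivative_X_pow, zero_mul, one_mul, zero_add, mul_one, add_zero, mul_zero,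
    zero_sub, Nat.cast_ofNat, pow_one, map_ofNat]
  linear_combination (Leg n) * hm - (Leg m) * hn


lemma integ_deriv (Q : Polynomial ℝ) :
    ∫ x in (-1:ℝ)..1, (derivative Q).eval x = Q.eval 1 - Q.eval (-1) := by
  exact intervalIntegral.integral_eq_sub_of_hasDerivAt (fun x _ => Q.hasDerivAt x)
    (((derivative Q).continuous).intervalIntegrable _ _)

lemma Leg_orth {m n : ℕ} (h : m ≠ n) :
    ∫ x in (-1:ℝ)..1, (Leg m).eval x * (Leg n).eval x = 0 := by
  set k : ℝ := (n:ℝ)*((n:ℝ)+1) - (m:ℝ)*((m:ℝ)+1) with hk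
  have hmono : ∀ a b : ℕ, a < b → (a:ℝ)*((a:ℝ)+1) < (b:ℝ)*((b:ℝ)+1) := by
    intro a b hab
    have h1 : (a:ℝ) < b := by exact_mod_cast hab
    have h2 : (0:ℝ) ≤ a := Nat.cast_nonneg a
    nlinarith
  have hk0 : k ≠ 0 := by
    rcases lt_or_gt_of_ne h with h' | h'
    · exact ne_of_gt (sub_pos.2 (hmono m n h'))
    · exact ne_of_lt (sub_neg.2 (hmono n m h'))
  set Q := (1 - X^2) * (derivative (Leg m) * Leg n - Leg m * derivative (Leg n)) with hQ
  have key : ∫ x in (-1:ℝ)..1, (derivative Q).eval x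
      = k * ∫ x in (-1:ℝ)..1, (Leg m).eval x * (Leg n).eval x := by
    rw [← intervalIntegral.integral_const_mul]
    apply intervalIntegral.integral_congr
    intro x _
    rw [Leg_wron m n]
    simp [hk]
  rw [integ_deriv] at key
  have hQ1 : Q.eval 1 = 0 := by simp [hQ]
  have hQm1 : Q.eval (-1) = 0 := by simp [hQ]
  rw [hQ1, hQm1] at key
  rw [sub_zero] at key
  exact (mul_eq_zero.mp key.symm).resolve_left hk0


lemma Leg_eval_rec (n : ℕ) (x : ℝ) :
    ((n:ℝ)+2) * eval x (Leg (n+2))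
      = (2*(n:ℝ)+3) * (x * eval x (Leg (n+1))) - ((n:ℝ)+1) * eval x (Leg n) := by
  have := congrArg (eval x) (Leg_rec n)
  simpa using this

lemma legInt (m n : ℕ) :
    IntervalIntegrable (fun x => eval x (Leg m) * eval x (Leg n)) volume (-1) 1 :=
  (((Leg m).continuous).mul ((Leg n).continuous)).intervalIntegrable _ _

lemma legIntX (m n : ℕ) :
    IntervalIntegrable (fun x => x * (eval x (Leg m) * eval x (Leg n))) volume (-1) 1 :=
  (continuous_id.mul (((Leg m).continuous).mul ((Leg n).continuous))).intervalIntegrable _ _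

lemma Leg_step1 (n : ℕ) :
    ∫ x in (-1:ℝ)..1, x * (eval x (Leg (n+1)) * eval x (Leg n))
      = (((n:ℝ)+1)/(2*(n:ℝ)+3)) * ∫ x in (-1:ℝ)..1, eval x (Leg n) * eval x (Leg n) := by
  have hcongr : ∫ x in (-1:ℝ)..1, (2*(n:ℝ)+3) * (x * (eval x (Leg (n+1)) * eval x (Leg n)))
      = ∫ x in (-1:ℝ)..1, (((n:ℝ)+2) * (eval x (Leg (n+2)) * eval x (Leg n))
          + ((n:ℝ)+1) * (eval x (Leg n) * eval x (Leg n))) := by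
    apply intervalIntegral.integral_congr
    intro x _
    linear_combination (-(eval x (Leg n))) * Leg_eval_rec n x
  rw [intervalIntegral.integral_const_mul] at hcongr
  rw [intervalIntegral.integral_add ((legInt (n+2) n).const_mul _) ((legInt n n).const_mul _)]
    at hcongr
  rw [intervalIntegral.integral_const_mul, intervalIntegral.integral_const_mul,
    Leg_orth (by omega : n+2 ≠ n)] at hcongr
  have h3 : (2*(n:ℝ)+3) ≠ 0 := by positivity
  rw [div_mul_eq_mul_div, eq_div_iff h3]
  linarith

lemma Leg_step2 (n : ℕ) :
    ∫ x in (-1:ℝ)..1, eval x (Leg (n+2)) * eval x (Leg (n+2))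
      = ((2*(n:ℝ)+3)/(2*(n:ℝ)+5))
        * ∫ x in (-1:ℝ)..1, eval x (Leg (n+1)) * eval x (Leg (n+1)) := by
  have hcongr : ∫ x in (-1:ℝ)..1, ((n:ℝ)+2) * (eval x (Leg (n+2)) * eval x (Leg (n+2)))
      = ∫ x in (-1:ℝ)..1, ((2*(n:ℝ)+3) * (x * (eval x (Leg (n+2)) * eval x (Leg (n+1))))
          - ((n:ℝ)+1) * (eval x (Leg n) * eval x (Leg (n+2)))) := by
    apply intervalIntegral.integral_congr
    intro x _
    linear_combination (eval x (Leg (n+2))) * Leg_eval_rec n x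
  rw [intervalIntegral.integral_const_mul] at hcongr
  rw [intervalIntegral.integral_sub ((legIntX (n+2) (n+1)).const_mul _)
    ((legInt n (n+2)).const_mul _)] at hcongr
  rw [intervalIntegral.integral_const_mul, intervalIntegral.integral_const_mul,
    Leg_orth (by omega : n ≠ n+2), Leg_step1 (n+1)] at hcongr
  have h2 : ((n:ℝ)+2) ≠ 0 := by positivity
  have h5 : (2*(n:ℝ)+5) ≠ 0 := by positivity
  push_cast at hcongr
  have h' : (∫ x in (-1:ℝ)..1, eval x (Leg (n+2)) * eval x (Leg (n+2))) * (2*(n:ℝ)+5)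
      = (2*(n:ℝ)+3) * ∫ x in (-1:ℝ)..1, eval x (Leg (n+1)) * eval x (Leg (n+1)) := by
    have h5' : (2*((n:ℝ)+1)+3) ≠ 0 := by positivity
    field_simp at hcongr
    apply mul_left_cancel₀ h2
    simp only [← sq]
    linear_combination hcongr
  rw [div_mul_eq_mul_div, eq_div_iff h5]
  linarith

lemma Leg_norm (n : ℕ) :
    ∫ x in (-1:ℝ)..1, eval x (Leg n) * eval x (Leg n) = 2/(2*(n:ℝ)+1) := by
  have h0 : ∫ x in (-1:ℝ)..1, eval x (Leg 0) * eval x (Leg 0) = 2 := by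
    norm_num [Leg_zero]
  have h1 : ∫ x in (-1:ℝ)..1, eval x (Leg 1) * eval x (Leg 1) = 2/3 := by
    have : ∫ x in (-1:ℝ)..1, eval x (Leg 1) * eval x (Leg 1)
        = ∫ x in (-1:ℝ)..1, x^2 := by
      apply intervalIntegral.integral_congr
      intro x _
      simp [Leg_one]; ring
    rw [this, integral_pow]
    norm_num
  have key : ∀ k : ℕ, ∫ x in (-1:ℝ)..1, eval x (Leg (k+1)) * eval x (Leg (k+1))
      = 2/(2*((k:ℝ)+1)+1) := by
    intro k
    induction k with
    | zero => rw [show (0:ℕ)+1 = 1 from rfl, h1]; norm_num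
    | succ k ih =>
      rw [show k+1+1 = k+2 from rfl, Leg_step2 k, ih]
      have h3 : (2*(k:ℝ)+3) ≠ 0 := by positivity
      have h5 : (2*(k:ℝ)+5) ≠ 0 := by positivity
      push_cast
      field_simp
      ring
  cases n with
  | zero => simpa using h0
  | succ k => simpa using key k


/-- Orthogonality of the Legendre polynomials defined by the standard
three-term recursion: `∫_{-1}^1 p m x * p n x dx = (2/(2n+1)) δ_{mn}`. -/
theorem legendre_orthogonality
    (p : ℕ → ℝ → ℝ)
    (hp0 : ∀ x, p 0 x = 1)
    (hp1 : ∀ x, p 1 x = x)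
    (hrec : ∀ (n : ℕ) (x : ℝ),
      ((n : ℝ) + 2) * p (n + 2) x
        = (2 * (n : ℝ) + 3) * x * p (n + 1) x - ((n : ℝ) + 1) * p n x)
    (m n : ℕ) :
    ∫ x in (-1 : ℝ)..1, p m x * p n x
      = if m = n then 2 / (2 * (n : ℝ) + 1) else 0 := by
  have peq2 : ∀ k : ℕ, (∀ x, p k x = eval x (Leg k)) ∧ (∀ x, p (k+1) x = eval x (Leg (k+1))) := by
    intro k
    induction k with
    | zero =>
      refine ⟨fun x => ?_, fun x => ?_⟩
      · rw [hp0]; simp [Leg_zero]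
      · rw [hp1]; simp [Leg_one]
    | succ k ih =>
      obtain ⟨ih0, ih1⟩ := ih
      refine ⟨ih1, fun x => ?_⟩
      have h2 : ((k:ℝ)+2) ≠ 0 := by positivity
      apply mul_left_cancel₀ h2
      rw [hrec k x, ih0 x, ih1 x]
      linear_combination -Leg_eval_rec k x
  have peq : ∀ k x, p k x = eval x (Leg k) := fun k => (peq2 k).1
  have : ∫ x in (-1 : ℝ)..1, p m x * p n x
      = ∫ x in (-1 : ℝ)..1, eval x (Leg m) * eval x (Leg n) := by
    apply intervalIntegral.integral_congr
    intro x _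
    dsimp only
    rw [peq, peq]
  rw [this]
  by_cases hmn : m = n
  · subst hmn
    rw [if_pos rfl]
    exact Leg_norm m
  · rw [if_neg hmn]
    exact Leg_orth hmn
end

section
/- Let f ∈ C^ℓ([-1,1]) and let α_k be the coefficients of its Legendre expansion f = Σ α_k P_k. Then α_k · k^ℓ → 0 as k → ∞. -/
open Polynomial

noncomputable def LP : ℕ → Polynomial ℝ
  | 0 => 1
  | 1 => X
  | (n+2) => C (((2:ℝ)*n+3)/(n+2)) * (X * LP (n+1)) - C (((n:ℝ)+1)/(n+2)) * LP n

noncomputable def l (n : ℕ) (x : ℝ) : ℝ := (LP n).eval x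
noncomputable def d (n : ℕ) (x : ℝ) : ℝ := (derivative (LP n)).eval x

lemma LP_rec (n : ℕ) :
    C ((n:ℝ)+2) * LP (n+2) = C (2*(n:ℝ)+3) * (X * LP (n+1)) - C ((n:ℝ)+1) * LP n := by
  have h : ((n:ℝ)+2) ≠ 0 := by positivity
  show C ((n:ℝ)+2) * (C (((2:ℝ)*n+3)/(n+2)) * (X * LP (n+1)) - C (((n:ℝ)+1)/(n+2)) * LP n) = _
  rw [mul_sub]
  congr 1 <;> rw [← mul_assoc, ← C_mul, mul_div_cancel₀ _ h]

lemma l_rec (n : ℕ) (x : ℝ) :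
    ((n:ℝ)+2) * l (n+2) x = (2*(n:ℝ)+3) * (x * l (n+1) x) - ((n:ℝ)+1) * l n x := by
  have h := congrArg (fun q => Polynomial.eval x q) (LP_rec n)
  simpa [l] using h

lemma d_rec (n : ℕ) (x : ℝ) :
    ((n:ℝ)+2) * d (n+2) x
      = (2*(n:ℝ)+3) * (l (n+1) x + x * d (n+1) x) - ((n:ℝ)+1) * d n x := by
  have h := congrArg (fun q => Polynomial.eval x (derivative q)) (LP_rec n)
  simp only [l, d]
  simp [derivative_mul] at h
  linarith

lemma AB (n : ℕ) :
    (∀ x, d (n+1) x = x * d n x + ((n:ℝ)+1) * l n x)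
    ∧ (∀ x, x * d (n+1) x = d n x + ((n:ℝ)+1) * l (n+1) x) := by
  induction n with
  | zero =>
    constructor <;> intro x <;> simp [l, d, LP]
  | succ m ih =>
    obtain ⟨hA, hB⟩ := ih
    have hne : ((m:ℝ)+2) ≠ 0 := by positivity
    have hA' : ∀ x, d (m+2) x = x * d (m+1) x + ((m:ℝ)+2) * l (m+1) x := by
      intro x
      have h1 := d_rec m x
      have h2 := hB x
      have h3 : ((m:ℝ)+2) * d (m+2) x = ((m:ℝ)+2) * (x * d (m+1) x + ((m:ℝ)+2) * l (m+1) x) := by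
        linear_combination h1 + ((m:ℝ)+1)*h2
      exact mul_left_cancel₀ hne h3
    refine ⟨by exact_mod_cast hA', ?_⟩
    -- C identity: (x^2-1) d(m+1) x = (m+1)(x l(m+1) x - l m x)
    have hC : ∀ x : ℝ, (x^2-1) * d (m+1) x = ((m:ℝ)+1) * (x * l (m+1) x - l m x) := by
      intro x
      have h1 := hA x
      have h2 := hB x
      linear_combination x * h2 - h1
    intro x
    have h1 := hA' x
    have h2 := hC x
    have h3 := l_rec m x
    have goal2 : ((m:ℝ)+2) * (x * d (m+2) x) = ((m:ℝ)+2) * (d (m+1) x + ((m:ℝ)+2) * l (m+2) x) := by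
      linear_combination ((m:ℝ)+2)*x*h1 + ((m:ℝ)+2)*h2 - ((m:ℝ)+2)*h3
    have := mul_left_cancel₀ hne goal2
    push_cast
    linarith [this]

noncomputable def dd (n : ℕ) (x : ℝ) : ℝ := (derivative (derivative (LP n))).eval x

lemma hA (n : ℕ) : ∀ x, d (n+1) x = x * d n x + ((n:ℝ)+1) * l n x := (AB n).1
lemma hB (n : ℕ) : ∀ x, x * d (n+1) x = d n x + ((n:ℝ)+1) * l (n+1) x := (AB n).2

lemma hC (n : ℕ) : ∀ x : ℝ, (x^2-1) * d (n+1) x = ((n:ℝ)+1) * (x * l (n+1) x - l n x) := by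
  intro x
  linear_combination x * (hB n x) - (hA n x)

lemma ode (n : ℕ) : ∀ x : ℝ, 2*x*(d n x) + (x^2-1)*(dd n x) = (n:ℝ)*((n:ℝ)+1)*(l n x) := by
  cases n with
  | zero => intro x; simp [l, d, dd, LP]
  | succ m =>
    have hpoly : ((X:Polynomial ℝ)^2 - 1) * derivative (LP (m+1))
        = C ((m:ℝ)+1) * (X * LP (m+1) - LP m) := by
      apply Polynomial.funext
      intro r
      have h := hC m r
      simp only [l, d] at h
      simp only [eval_mul, eval_sub, eval_pow, eval_X, eval_one, eval_C]
      linear_combination h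
    intro x
    have h := congrArg (fun q => Polynomial.eval x (derivative q)) hpoly
    simp [derivative_mul, d, dd, l] at h
    have hb := hB m x
    simp only [l, d] at hb
    simp only [l, d, dd]
    push_cast
    linear_combination h + ((m:ℝ)+1)*hb

noncomputable def Wp (m n : ℕ) : Polynomial ℝ :=
  ((X:Polynomial ℝ)^2 - 1) * (derivative (LP n) * LP m - derivative (LP m) * LP n)

lemma eval_deriv_Wp (m n : ℕ) (x : ℝ) :
    (derivative (Wp m n)).eval x
      = ((n:ℝ)*((n:ℝ)+1) - (m:ℝ)*((m:ℝ)+1)) * (l n x * l m x) := by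
  simp only [Wp, derivative_mul, derivative_sub, derivative_X_pow, derivative_one]
  simp only [eval_mul, eval_sub, eval_add, eval_pow, eval_X, eval_one, eval_C, pow_one, eval_zero]
  have h1 := ode n x
  have h2 := ode m x
  simp only [l, d, dd] at h1 h2 ⊢
  push_cast at h1 h2 ⊢
  linear_combination (eval x (LP m)) * h1 - (eval x (LP n)) * h2

lemma poly_ftc (R : Polynomial ℝ) :
    ∫ x in (-1:ℝ)..1, (derivative R).eval x = R.eval 1 - R.eval (-1) := by
  exact intervalIntegral.integral_eq_sub_of_hasDerivAt
    (f := fun x => R.eval x) (f' := fun x => (derivative R).eval x)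
    (fun x _ => R.hasDerivAt x) (((derivative R).continuous).intervalIntegrable _ _)

lemma orth {m n : ℕ} (hmn : m ≠ n) : (∫ x in (-1:ℝ)..1, l m x * l n x) = 0 := by
  have key : (∫ x in (-1:ℝ)..1, (derivative (Wp m n)).eval x) = 0 := by
    rw [poly_ftc]
    simp [Wp]
  rw [intervalIntegral.integral_congr (g := fun x => ((n:ℝ)*((n:ℝ)+1) - (m:ℝ)*((m:ℝ)+1)) * (l n x * l m x)) (by intro x _; exact eval_deriv_Wp m n x)] at key
  rw [intervalIntegral.integral_const_mul] at key
  have hc : ((n:ℝ)*((n:ℝ)+1) - (m:ℝ)*((m:ℝ)+1)) ≠ 0 := by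
    intro h
    rcases Nat.lt_or_ge m n with hl | hl
    · have : (m:ℝ) < n := by exact_mod_cast hl
      nlinarith
    · have hl2 : n < m := lt_of_le_of_ne hl (Ne.symm hmn)
      have : (n:ℝ) < m := by exact_mod_cast hl2
      nlinarith
  have := (mul_eq_zero.mp key).resolve_left hc
  rw [← this]
  apply intervalIntegral.integral_congr
  intro x _
  simp [l]; ring

noncomputable def PI (Q : Polynomial ℝ) : ℝ := ∫ x in (-1:ℝ)..1, Q.eval x

lemma PI_sub (Q R : Polynomial ℝ) : PI (Q - R) = PI Q - PI R := by
  simp only [PI, eval_sub]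
  exact intervalIntegral.integral_sub (Q.continuous.intervalIntegrable _ _)
    (R.continuous.intervalIntegrable _ _)

lemma PI_Cmul (c : ℝ) (Q : Polynomial ℝ) : PI (C c * Q) = c * PI Q := by
  simp only [PI, eval_mul, eval_C]
  exact intervalIntegral.integral_const_mul _ _

lemma orth' {m n : ℕ} (hmn : m ≠ n) : PI (LP m * LP n) = 0 := by
  have h := orth hmn
  simp only [l] at h
  simpa [PI, eval_mul] using h

lemma J_zero : PI (LP 0 * LP 0) = 2 := by
  simp [PI, LP]
  norm_num

lemma J_one : PI (LP 1 * LP 1) = 2/3 := by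
  have h : PI (LP 1 * LP 1) = ∫ x in (-1:ℝ)..1, x^2 := by
    simp only [PI, LP, eval_mul, eval_X]
    apply intervalIntegral.integral_congr
    intro x _; ring
  rw [h, integral_pow]
  norm_num

lemma J_succ (n : ℕ) :
    PI (LP (n+1) * LP (n+1)) = (2*(n:ℝ)+1)/(2*(n:ℝ)+3) * PI (LP n * LP n) := by
  cases n with
  | zero => rw [J_zero, J_one]; norm_num
  | succ m =>
    have h2 : ((m:ℝ)+2) ≠ 0 := by positivity
    have h1 := LP_rec (m+1)
    push_cast at h1
    rw [show m+1+2 = m+3 from rfl, show m+1+1 = m+2 from rfl,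
      show ((m:ℝ)+1+2) = (m:ℝ)+3 by ring, show (2*((m:ℝ)+1)+3) = 2*(m:ℝ)+5 by ring,
      show ((m:ℝ)+1+1) = (m:ℝ)+2 by ring] at h1
    have e1 : C ((m:ℝ)+3) * (LP (m+3) * LP (m+1))
        = C (2*(m:ℝ)+5) * ((X * LP (m+2)) * LP (m+1)) - C ((m:ℝ)+2) * (LP (m+1) * LP (m+1)) := by
      linear_combination (LP (m+1)) * h1
    have E1 := congrArg PI e1
    rw [PI_Cmul, PI_sub, PI_Cmul, PI_Cmul, orth' (m := m+3) (n := m+1) (by omega)] at E1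
    have e2 : C ((m:ℝ)+2) * (LP (m+2) * LP (m+2))
        = C (2*(m:ℝ)+3) * ((X * LP (m+2)) * LP (m+1)) - C ((m:ℝ)+1) * (LP m * LP (m+2)) := by
      linear_combination (LP (m+2)) * (LP_rec m)
    have E2 := congrArg PI e2
    rw [PI_Cmul, PI_sub, PI_Cmul, PI_Cmul, orth' (m := m) (n := m+2) (by omega)] at E2
    have key : ((m:ℝ)+2) * (PI (LP (m+2) * LP (m+2)) * (2*(m:ℝ)+5))
        = ((m:ℝ)+2) * ((2*(m:ℝ)+3) * PI (LP (m+1) * LP (m+1))) := by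
      linear_combination (2*(m:ℝ)+5)*E2 - (2*(m:ℝ)+3)*E1
    have key2 := mul_left_cancel₀ h2 key
    push_cast
    show PI (LP (m+2) * LP (m+2))
        = (2*((m:ℝ)+1)+1)/(2*((m:ℝ)+1)+3) * PI (LP (m+1) * LP (m+1))
    rw [div_mul_eq_mul_div, eq_div_iff (by positivity : (2*((m:ℝ)+1)+3) ≠ 0)]
    linear_combination key2

lemma Jval (n : ℕ) : PI (LP n * LP n) = 2/(2*(n:ℝ)+1) := by
  induction n with
  | zero => simpa using J_zero
  | succ m ih =>
    rw [J_succ, ih]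
    have h1 : (2*(m:ℝ)+1) ≠ 0 := by positivity
    have h3 : (2*(m:ℝ)+3) ≠ 0 := by positivity
    push_cast
    field_simp
    ring

open MeasureTheory intervalIntegral Set Filter

lemma contDiff_eval (q : Polynomial ℝ) {n : WithTop ℕ∞} : ContDiff ℝ n fun x => q.eval x := by
  induction q using Polynomial.induction_on' with
  | add r s hr hs => simpa [eval_add] using hr.add hs
  | monomial k a => simpa [eval_monomial] using (contDiff_const (c := a)).mul (contDiff_id.pow k)

lemma l_cont (n : ℕ) : Continuous (l n) := (LP n).continuous

lemma l_sq_int (n : ℕ) : (∫ x in (-1:ℝ)..1, (l n x)^2) = 2/(2*(n:ℝ)+1) := by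
  have h := Jval n
  rw [PI] at h
  rw [← h]
  apply intervalIntegral.integral_congr
  intro x _
  simp [l, sq]

lemma intabs (n : ℕ) : (∫ x in (-1:ℝ)..1, |l n x|) ≤ 2/Real.sqrt (2*(n:ℝ)+1) := by
  set s := Real.sqrt (2*(n:ℝ)+1) with hs_def
  have hs : 0 < s := Real.sqrt_pos.2 (by positivity)
  have hs2 : s^2 = 2*(n:ℝ)+1 := Real.sq_sqrt (by positivity)
  have hpt : ∀ x ∈ Icc (-1:ℝ) 1, |l n x| ≤ ((l n x)^2 + (1/s)^2)/(2*(1/s)) := by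
    intro x _
    rw [le_div_iff₀ (by positivity)]
    nlinarith [sq_nonneg (|l n x| - 1/s), sq_abs (l n x)]
  calc (∫ x in (-1:ℝ)..1, |l n x|)
      ≤ ∫ x in (-1:ℝ)..1, ((l n x)^2 + (1/s)^2)/(2*(1/s)) := by
        apply intervalIntegral.integral_mono_on (by norm_num)
        · exact ((l_cont n).abs.intervalIntegrable _ _)
        · exact ((((l_cont n).pow 2).add continuous_const).div_const _).intervalIntegrable _ _
        · exact hpt
    _ = ((∫ x in (-1:ℝ)..1, (l n x)^2) + (∫ x in (-1:ℝ)..1, ((1/s)^2 : ℝ)))/(2*(1/s)) := by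
        rw [← intervalIntegral.integral_add (f := fun x => (l n x)^2) (((l_cont n).pow 2).intervalIntegrable _ _)
          (continuous_const.intervalIntegrable _ _), intervalIntegral.integral_div]
    _ = 2/s := by
        rw [l_sq_int, intervalIntegral.integral_const, ← hs2]
        field_simp
        ring_nf; rw [inv_pow, mul_inv_cancel₀ (pow_ne_zero 2 hs.ne')]; norm_num

lemma LP_eval_one (n : ℕ) : (LP n).eval 1 = 1 := by
  induction n using Nat.strong_induction_on with
  | _ n ih =>
    match n with
    | 0 => simp [LP]
    | 1 => simp [LP]
    | (m+2) =>
      have h1 := ih (m+1) (by omega)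
      have h0 := ih m (by omega)
      have h := congrArg (fun q => Polynomial.eval (1:ℝ) q) (LP_rec m)
      simp [h1, h0] at h
      have hne : ((m:ℝ)+2) ≠ 0 := by positivity
      have h2 : ((m:ℝ)+2) * (LP (m+2)).eval 1 = ((m:ℝ)+2) * 1 := by linarith
      exact mul_left_cancel₀ hne h2

lemma LP_eval_neg_one (n : ℕ) : (LP n).eval (-1) = (-1)^n := by
  induction n using Nat.strong_induction_on with
  | _ n ih =>
    match n with
    | 0 => simp [LP]
    | 1 => simp [LP]
    | (m+2) =>
      have h1 := ih (m+1) (by omega)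
      have h0 := ih m (by omega)
      have h := congrArg (fun q => Polynomial.eval (-1:ℝ) q) (LP_rec m)
      simp [h1, h0, pow_succ] at h
      have hne : ((m:ℝ)+2) ≠ 0 := by positivity
      have h2 : ((m:ℝ)+2) * (LP (m+2)).eval (-1) = ((m:ℝ)+2) * ((-1)^m) := by linarith
      have h3 := mul_left_cancel₀ hne h2
      rw [h3]; ring

noncomputable def bet (g : ℝ → ℝ) (n : ℕ) : ℝ := ∫ x in (-1:ℝ)..1, g x * l n x

lemma myuIcc : Set.uIcc (-1:ℝ) 1 = Set.Icc (-1:ℝ) 1 := Set.uIcc_of_le (by norm_num)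

lemma bet_bound {g : ℝ → ℝ} {M : ℝ} (hg : ContinuousOn g (Set.Icc (-1:ℝ) 1))
    (hM : ∀ x ∈ Set.Icc (-1:ℝ) 1, |g x| ≤ M) (n : ℕ) :
    |bet g n| ≤ M * (2/Real.sqrt (2*(n:ℝ)+1)) := by
  have hM0 : 0 ≤ M := le_trans (abs_nonneg _) (hM 1 ⟨by norm_num, le_refl _⟩)
  have hgi : IntervalIntegrable (fun x => g x * l n x) volume (-1) 1 := by
    apply ContinuousOn.intervalIntegrable
    rw [myuIcc]
    exact hg.mul (l_cont n).continuousOn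
  calc |bet g n| ≤ ∫ x in (-1:ℝ)..1, |g x * l n x| :=
        intervalIntegral.abs_integral_le_integral_abs (by norm_num)
    _ ≤ ∫ x in (-1:ℝ)..1, M * |l n x| := by
        apply intervalIntegral.integral_mono_on (by norm_num) hgi.abs
          ((continuous_const.mul (l_cont n).abs).intervalIntegrable _ _)
        intro x hx
        rw [abs_mul]
        exact mul_le_mul_of_nonneg_right (hM x hx) (abs_nonneg _)
    _ = M * ∫ x in (-1:ℝ)..1, |l n x| := intervalIntegral.integral_const_mul _ _
    _ ≤ M * (2/Real.sqrt (2*(n:ℝ)+1)) := mul_le_mul_of_nonneg_left (intabs n) hM0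

lemma ibp (f : ℝ → ℝ) (hf : ContDiffOn ℝ 1 f (Set.Icc (-1:ℝ) 1)) (R : Polynomial ℝ) :
    (∫ x in (-1:ℝ)..1, f x * (derivative R).eval x)
      = f 1 * R.eval 1 - f (-1) * R.eval (-1)
        - ∫ x in (-1:ℝ)..1, derivWithin f (Set.Icc (-1:ℝ) 1) x * R.eval x := by
  set g := derivWithin f (Set.Icc (-1:ℝ) 1) with hg_def
  have hUD : UniqueDiffOn ℝ (Set.Icc (-1:ℝ) 1) := uniqueDiffOn_Icc (by norm_num)
  have hgc : ContinuousOn g (Set.Icc (-1:ℝ) 1) := hf.continuousOn_derivWithin hUD le_rfl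
  have hfc : ContinuousOn f (Set.Icc (-1:ℝ) 1) := hf.continuousOn
  have int1 : IntervalIntegrable (fun x => g x * R.eval x) volume (-1) 1 := by
    apply ContinuousOn.intervalIntegrable; rw [myuIcc]; exact hgc.mul R.continuous.continuousOn
  have int2 : IntervalIntegrable (fun x => f x * (derivative R).eval x) volume (-1) 1 := by
    apply ContinuousOn.intervalIntegrable; rw [myuIcc]
    exact hfc.mul (derivative R).continuous.continuousOn
  have key := intervalIntegral.integral_eq_sub_of_hasDerivAt_of_le (a := (-1:ℝ)) (b := 1)
    (f := fun x => f x * R.eval x)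
    (f' := fun x => g x * R.eval x + f x * (derivative R).eval x)
    (by norm_num) (hfc.mul R.continuous.continuousOn) ?_ (int1.add int2)
  · have split := intervalIntegral.integral_add int1 int2
    rw [split] at key
    have key2 : (∫ x in (-1:ℝ)..1, g x * R.eval x) + ∫ x in (-1:ℝ)..1, f x * (derivative R).eval x
        = f 1 * R.eval 1 - f (-1) * R.eval (-1) := key
    linarith [key2]
  · intro x hx
    have hmem : Set.Icc (-1:ℝ) 1 ∈ nhds x := Icc_mem_nhds hx.1 hx.2
    have hdf : DifferentiableAt ℝ f x := (hf.differentiableOn one_ne_zero).differentiableAt hmem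
    have h1 : HasDerivAt f (g x) x := by
      rw [hg_def, derivWithin_of_mem_nhds hmem]
      exact hdf.hasDerivAt
    exact h1.mul (R.hasDerivAt x)

lemma bet_rec (f : ℝ → ℝ) (hf : ContDiffOn ℝ 1 f (Set.Icc (-1:ℝ) 1)) (n : ℕ) :
    (2*(n:ℝ)+3) * bet f (n+1)
      = bet (derivWithin f (Set.Icc (-1:ℝ) 1)) n
        - bet (derivWithin f (Set.Icc (-1:ℝ) 1)) (n+2) := by
  set g := derivWithin f (Set.Icc (-1:ℝ) 1) with hg_def
  have hgc : ContinuousOn g (Set.Icc (-1:ℝ) 1) :=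
    hf.continuousOn_derivWithin (uniqueDiffOn_Icc (by norm_num)) le_rfl
  have hpt : ∀ x : ℝ, (derivative (LP (n+2) - LP n)).eval x = (2*(n:ℝ)+3) * l (n+1) x := by
    intro x
    simp only [derivative_sub, eval_sub]
    have h1 := hA (n+1) x
    have h2 := hB n x
    push_cast at h1
    show d (n+2) x - d n x = _
    linear_combination h1 + h2
  have hL := ibp f hf (LP (n+2) - LP n)
  have e1 : (∫ x in (-1:ℝ)..1, f x * (derivative (LP (n+2) - LP n)).eval x)
      = (2*(n:ℝ)+3) * bet f (n+1) := by
    rw [intervalIntegral.integral_congr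
      (g := fun x => (2*(n:ℝ)+3) * (f x * l (n+1) x)) (fun x _ => by rw [hpt x]; ring)]
    exact intervalIntegral.integral_const_mul _ _
  have e2 : (∫ x in (-1:ℝ)..1, g x * (LP (n+2) - LP n).eval x)
      = bet g (n+2) - bet g n := by
    rw [intervalIntegral.integral_congr
      (g := fun x => g x * l (n+2) x - g x * l n x) (fun x _ => by simp [l]; ring)]
    apply intervalIntegral.integral_sub <;>
    · apply ContinuousOn.intervalIntegrable; rw [myuIcc]
      exact hgc.mul (l_cont _).continuousOn
  have b1 : (LP (n+2) - LP n).eval 1 = 0 := by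
    simp [LP_eval_one]
  have b2 : (LP (n+2) - LP n).eval (-1) = 0 := by
    simp [LP_eval_neg_one, pow_succ]
  rw [e1, e2, b1, b2] at hL
  linarith [hL]

lemma sqrt_le_sqrt' {a b : ℝ} (h : a ≤ b) : Real.sqrt a ≤ Real.sqrt b := Real.sqrt_le_sqrt h

lemma bet_decay_C1 (f : ℝ → ℝ) (hf : ContDiffOn ℝ 1 f (Set.Icc (-1:ℝ) 1)) :
    Tendsto (fun k : ℕ => bet f k * Real.sqrt k) atTop (nhds 0) := by
  set g := derivWithin f (Set.Icc (-1:ℝ) 1) with hg_def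
  have hgc : ContinuousOn g (Set.Icc (-1:ℝ) 1) :=
    hf.continuousOn_derivWithin (uniqueDiffOn_Icc (by norm_num)) le_rfl
  obtain ⟨M, hM⟩ := (isCompact_Icc).exists_bound_of_continuousOn hgc
  have hM' : ∀ x ∈ Set.Icc (-1:ℝ) 1, |g x| ≤ M := by
    intro x hx; simpa [Real.norm_eq_abs] using hM x hx
  have hM0 : 0 ≤ M := le_trans (abs_nonneg _) (hM' 1 ⟨by norm_num, le_refl _⟩)
  rw [← Filter.tendsto_add_atTop_iff_nat 1]
  apply squeeze_zero_norm (a := fun n : ℕ => 4*M/((n:ℝ)+1))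
  · intro n
    have hs1 : (0:ℝ) < Real.sqrt (2*(n:ℝ)+1) := Real.sqrt_pos.2 (by positivity)
    have e1 : |bet g n| ≤ M * (2/Real.sqrt (2*(n:ℝ)+1)) := bet_bound hgc hM' n
    have e2 : |bet g (n+2)| ≤ M * (2/Real.sqrt (2*(n:ℝ)+1)) := by
      refine (bet_bound hgc hM' (n+2)).trans ?_
      gcongr
      omega
    have hrec := bet_rec f hf n
    have e3 : |bet f (n+1)| ≤ 4*M/((2*(n:ℝ)+3) * Real.sqrt (2*(n:ℝ)+1)) := by
      have habs : |(2*(n:ℝ)+3) * bet f (n+1)| ≤ |bet g n| + |bet g (n+2)| := by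
        rw [hrec]; exact abs_sub _ _
      rw [abs_mul, abs_of_pos (by positivity : (0:ℝ) < 2*(n:ℝ)+3)] at habs
      rw [le_div_iff₀ (by positivity)]
      calc |bet f (n+1)| * ((2*(n:ℝ)+3) * Real.sqrt (2*(n:ℝ)+1))
          = ((2*(n:ℝ)+3) * |bet f (n+1)|) * Real.sqrt (2*(n:ℝ)+1) := by ring
        _ ≤ (|bet g n| + |bet g (n+2)|) * Real.sqrt (2*(n:ℝ)+1) := by
            apply mul_le_mul_of_nonneg_right habs hs1.le
        _ ≤ (M * (2/Real.sqrt (2*(n:ℝ)+1)) + M * (2/Real.sqrt (2*(n:ℝ)+1)))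
              * Real.sqrt (2*(n:ℝ)+1) := by
            apply mul_le_mul_of_nonneg_right (add_le_add e1 e2) hs1.le
        _ = 4*M := by field_simp; ring
    have e4 : Real.sqrt ((n:ℝ)+1) ≤ Real.sqrt (2*(n:ℝ)+1) := by
      apply sqrt_le_sqrt'; linarith
    have e5 : ‖bet f (n+1) * Real.sqrt ((n:ℝ)+1)‖
        ≤ (4*M/((2*(n:ℝ)+3) * Real.sqrt (2*(n:ℝ)+1))) * Real.sqrt (2*(n:ℝ)+1) := by
      rw [Real.norm_eq_abs, abs_mul, abs_of_nonneg (Real.sqrt_nonneg _)]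
      exact mul_le_mul e3 e4 (Real.sqrt_nonneg _) (by positivity)
    have e6 : (4*M/((2*(n:ℝ)+3) * Real.sqrt (2*(n:ℝ)+1))) * Real.sqrt (2*(n:ℝ)+1)
        = 4*M/(2*(n:ℝ)+3) := by field_simp
    have e7 : 4*M/(2*(n:ℝ)+3) ≤ 4*M/((n:ℝ)+1) := by
      gcongr <;> linarith [Nat.cast_nonneg (α := ℝ) n]
    calc ‖bet f (n+1) * Real.sqrt (↑(n+1))‖
        = ‖bet f (n+1) * Real.sqrt ((n:ℝ)+1)‖ := by push_cast; ring_nf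
      _ ≤ 4*M/((n:ℝ)+1) := by rw [e6] at e5; exact e5.trans e7
  · have := (tendsto_const_div_atTop_nhds_zero_nat (4*M)).comp (tendsto_add_atTop_nat 1)
    convert this using 2 with n
    push_cast [Function.comp]
    ring

lemma bet_poly (q : Polynomial ℝ) :
    Tendsto (fun k : ℕ => bet (fun x => q.eval x) k * Real.sqrt k) atTop (nhds 0) :=
  bet_decay_C1 _ (contDiff_eval q).contDiffOn

lemma bet_decay_C0 (f : ℝ → ℝ) (hf : ContinuousOn f (Set.Icc (-1:ℝ) 1)) :
    Tendsto (fun k : ℕ => bet f k * Real.sqrt k) atTop (nhds 0) := by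
  rw [Metric.tendsto_atTop]
  intro ε hε
  obtain ⟨q, hq⟩ := exists_polynomial_near_of_continuousOn (-1) 1 f hf (ε/8) (by positivity)
  have hpoly := bet_poly q
  rw [Metric.tendsto_atTop] at hpoly
  obtain ⟨N, hN⟩ := hpoly (ε/2) (by positivity)
  refine ⟨N, fun k hk => ?_⟩
  have hsplit : bet f k = bet (fun x => f x - q.eval x) k + bet (fun x => q.eval x) k := by
    rw [bet, intervalIntegral.integral_congr
      (g := fun x => (f x - q.eval x) * l k x + q.eval x * l k x) (fun x _ => by ring)]
    rw [intervalIntegral.integral_add]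
    · rfl
    · apply ContinuousOn.intervalIntegrable; rw [myuIcc]
      exact (hf.sub q.continuous.continuousOn).mul (l_cont k).continuousOn
    · exact (q.continuous.mul (l_cont k)).intervalIntegrable _ _
  have hb : |bet (fun x => f x - q.eval x) k| ≤ (ε/8) * (2/Real.sqrt (2*(k:ℝ)+1)) := by
    apply bet_bound (hf.sub q.continuous.continuousOn)
    intro x hx
    rw [Pi.sub_apply, abs_sub_comm]
    exact (hq x hx).le
  have hs1 : (0:ℝ) < Real.sqrt (2*(k:ℝ)+1) := Real.sqrt_pos.2 (by positivity)
  have hsk : Real.sqrt (k:ℝ) ≤ Real.sqrt (2*(k:ℝ)+1) := by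
    apply sqrt_le_sqrt'
    have := Nat.cast_nonneg (α := ℝ) k
    linarith
  have h1 : |bet (fun x => f x - q.eval x) k * Real.sqrt (k:ℝ)| ≤ ε/2 := by
    rw [abs_mul, abs_of_nonneg (Real.sqrt_nonneg _)]
    calc |bet (fun x => f x - q.eval x) k| * Real.sqrt (k:ℝ)
        ≤ ((ε/8) * (2/Real.sqrt (2*(k:ℝ)+1))) * Real.sqrt (2*(k:ℝ)+1) :=
          mul_le_mul hb hsk (Real.sqrt_nonneg _) (by positivity)
      _ = ε/4 := by field_simp; ring
      _ ≤ ε/2 := by linarith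
  have h2 : |bet (fun x => q.eval x) k * Real.sqrt (k:ℝ)| < ε/2 := by
    have := hN k hk
    rwa [Real.dist_eq, sub_zero] at this
  rw [Real.dist_eq, sub_zero]
  calc |bet f k * Real.sqrt (k:ℝ)|
      = |bet (fun x => f x - q.eval x) k * Real.sqrt (k:ℝ)
          + bet (fun x => q.eval x) k * Real.sqrt (k:ℝ)| := by rw [hsplit]; ring_nf
    _ ≤ |bet (fun x => f x - q.eval x) k * Real.sqrt (k:ℝ)|
          + |bet (fun x => q.eval x) k * Real.sqrt (k:ℝ)| := abs_add_le _ _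
    _ < ε := by linarith

lemma main_decay : ∀ (m : ℕ) (f : ℝ → ℝ), ContDiffOn ℝ m f (Set.Icc (-1:ℝ) 1) →
    Tendsto (fun k : ℕ => bet f k * (k:ℝ)^m * Real.sqrt k) atTop (nhds 0) := by
  intro m
  induction m with
  | zero => intro f hf; simpa using bet_decay_C0 f hf.continuousOn
  | succ m ih =>
    intro f hf
    set g := derivWithin f (Set.Icc (-1:ℝ) 1) with hg_def
    have hUD : UniqueDiffOn ℝ (Set.Icc (-1:ℝ) 1) := uniqueDiffOn_Icc (by norm_num)
    have hg : ContDiffOn ℝ m g (Set.Icc (-1:ℝ) 1) := hf.derivWithin hUD (by exact_mod_cast le_rfl)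
    have hf1 : ContDiffOn ℝ 1 f (Set.Icc (-1:ℝ) 1) :=
      hf.of_le (by exact_mod_cast Nat.succ_le_succ (Nat.zero_le m))
    have IH := ih g hg
    have IH2 : Tendsto (fun n : ℕ => bet g (n+2) * ((n:ℝ)+2)^m * Real.sqrt ((n:ℝ)+2))
        atTop (nhds 0) := by
      have h := IH.comp (tendsto_add_atTop_nat 2)
      convert h using 2 with n
      simp [Function.comp]
      try push_cast
      try ring_nf
    set Cst : ℝ := 2^(m+1) * Real.sqrt 2 with hCst_def
    have hCst0 : 0 < Cst := by positivity
    have hsqrt2 : (1:ℝ) ≤ Real.sqrt 2 := by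
      rw [show (1:ℝ) = Real.sqrt 1 from (Real.sqrt_one).symm]
      exact sqrt_le_sqrt' (by norm_num)
    have hCst1 : (1:ℝ) ≤ Cst := by
      rw [hCst_def]
      have h1 : (1:ℝ) ≤ 2^(m+1) := one_le_pow₀ (by norm_num)
      nlinarith
    have htend : Tendsto (fun n : ℕ => Cst * (|bet g n * (n:ℝ)^m * Real.sqrt n|
        + |bet g (n+2) * ((n:ℝ)+2)^m * Real.sqrt ((n:ℝ)+2)|)) atTop (nhds 0) := by
      have h := ((IH.abs).add (IH2.abs)).const_mul Cst
      simpa using h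
    rw [← Filter.tendsto_add_atTop_iff_nat 1]
    apply squeeze_zero_norm' (t₀ := atTop)
    swap
    · exact htend
    filter_upwards [eventually_ge_atTop 1] with n hn
    set u : ℝ := (n:ℝ) with hu_def
    have hu : (1:ℝ) ≤ u := by rw [hu_def]; exact_mod_cast hn
    have hu0 : (0:ℝ) ≤ u := by linarith
    have hcast : ((n+1:ℕ):ℝ) = u + 1 := by push_cast; ring
    show ‖bet f (n+1) * ((n+1:ℕ):ℝ)^(m+1) * Real.sqrt ((n+1:ℕ):ℝ)‖ ≤ _
    rw [hcast]
    have habs : (2*u+3) * |bet f (n+1)| ≤ |bet g n| + |bet g (n+2)| := by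
      have hrec := bet_rec f hf1 n
      rw [← hg_def] at hrec
      have := abs_sub (bet g n) (bet g (n+2))
      rw [← hrec, abs_mul, abs_of_pos (by positivity : (0:ℝ) < 2*u+3)] at this
      exact this
    have p1 : (u+1)^(m+1) ≤ 2^(m+1) * u^(m+1) := by
      calc (u+1)^(m+1) ≤ (2*u)^(m+1) := pow_le_pow_left₀ (by linarith) (by linarith) _
        _ = 2^(m+1) * u^(m+1) := mul_pow _ _ _
    have p2 : Real.sqrt (u+1) ≤ Real.sqrt 2 * Real.sqrt u := by
      rw [← Real.sqrt_mul (by norm_num)]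
      exact sqrt_le_sqrt' (by linarith)
    have hden : (0:ℝ) < 2*u+3 := by linarith
    have hr1 : (u+1)^(m+1) * Real.sqrt (u+1) / (2*u+3) ≤ Cst * (u^m * Real.sqrt u) := by
      rw [div_le_iff₀ hden]
      calc (u+1)^(m+1) * Real.sqrt (u+1)
          ≤ (2^(m+1) * u^(m+1)) * (Real.sqrt 2 * Real.sqrt u) :=
            mul_le_mul p1 p2 (Real.sqrt_nonneg _) (by positivity)
        _ = (Cst * (u^m * Real.sqrt u)) * u := by rw [hCst_def]; ring
        _ ≤ (Cst * (u^m * Real.sqrt u)) * (2*u+3) := by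
            apply mul_le_mul_of_nonneg_left (by linarith) (by positivity)
    have hr2 : (u+1)^(m+1) * Real.sqrt (u+1) / (2*u+3) ≤ Cst * ((u+2)^m * Real.sqrt (u+2)) := by
      rw [div_le_iff₀ hden]
      have q1 : (u+1)^(m+1) ≤ (2*u+3) * (u+2)^m := by
        calc (u+1)^(m+1) = (u+1) * (u+1)^m := by ring
          _ ≤ (2*u+3) * (u+2)^m :=
            mul_le_mul (by linarith) (pow_le_pow_left₀ (by linarith) (by linarith) m)
              (by positivity) (by linarith)
      have q2 : Real.sqrt (u+1) ≤ Real.sqrt (u+2) := sqrt_le_sqrt' (by linarith)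
      calc (u+1)^(m+1) * Real.sqrt (u+1)
          ≤ ((2*u+3) * (u+2)^m) * Real.sqrt (u+2) :=
            mul_le_mul q1 q2 (Real.sqrt_nonneg _) (by positivity)
        _ = ((u+2)^m * Real.sqrt (u+2)) * (2*u+3) := by ring
        _ ≤ Cst * ((u+2)^m * Real.sqrt (u+2)) * (2*u+3) := by
            apply mul_le_mul_of_nonneg_right _ hden.le
            exact le_mul_of_one_le_left (by positivity) hCst1
    have key : |bet f (n+1)| * ((u+1)^(m+1) * Real.sqrt (u+1))
        ≤ Cst * (|bet g n| * (u^m * Real.sqrt u)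
            + |bet g (n+2)| * ((u+2)^m * Real.sqrt (u+2))) := by
      have e0 : |bet f (n+1)| * ((u+1)^(m+1) * Real.sqrt (u+1))
          = ((2*u+3) * |bet f (n+1)|) * ((u+1)^(m+1) * Real.sqrt (u+1) / (2*u+3)) := by
        field_simp
      rw [e0]
      calc ((2*u+3) * |bet f (n+1)|) * ((u+1)^(m+1) * Real.sqrt (u+1) / (2*u+3))
          ≤ (|bet g n| + |bet g (n+2)|) * ((u+1)^(m+1) * Real.sqrt (u+1) / (2*u+3)) :=
            mul_le_mul_of_nonneg_right habs (by positivity)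
        _ = |bet g n| * ((u+1)^(m+1) * Real.sqrt (u+1) / (2*u+3))
            + |bet g (n+2)| * ((u+1)^(m+1) * Real.sqrt (u+1) / (2*u+3)) := by ring
        _ ≤ |bet g n| * (Cst * (u^m * Real.sqrt u))
            + |bet g (n+2)| * (Cst * ((u+2)^m * Real.sqrt (u+2))) := by
            apply add_le_add
            · exact mul_le_mul_of_nonneg_left hr1 (abs_nonneg _)
            · exact mul_le_mul_of_nonneg_left hr2 (abs_nonneg _)
        _ = Cst * (|bet g n| * (u^m * Real.sqrt u)
            + |bet g (n+2)| * ((u+2)^m * Real.sqrt (u+2))) := by ring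
    calc ‖bet f (n+1) * (u+1)^(m+1) * Real.sqrt (u+1)‖
        = |bet f (n+1)| * ((u+1)^(m+1) * Real.sqrt (u+1)) := by
          rw [Real.norm_eq_abs, abs_mul, abs_mul, abs_of_nonneg (by positivity : (0:ℝ) ≤ (u+1)^(m+1)),
            abs_of_nonneg (Real.sqrt_nonneg _)]
          ring
      _ ≤ Cst * (|bet g n| * (u^m * Real.sqrt u)
            + |bet g (n+2)| * ((u+2)^m * Real.sqrt (u+2))) := key
      _ = Cst * (|bet g n * u^m * Real.sqrt u|
            + |bet g (n+2) * (u+2)^m * Real.sqrt (u+2)|) := by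
          rw [abs_mul, abs_mul, abs_mul, abs_mul,
            abs_of_nonneg (by positivity : (0:ℝ) ≤ u^m),
            abs_of_nonneg (by positivity : (0:ℝ) ≤ (u+2)^m),
            abs_of_nonneg (Real.sqrt_nonneg (u:ℝ)), abs_of_nonneg (Real.sqrt_nonneg (u+2))]
          ring

/-- For `f ∈ C^ℓ([-1,1])`, the normalized Legendre coefficients satisfy
`α_k k^ℓ → 0` as `k → ∞`. -/
theorem legendre_coefficient_decay
    (p : ℕ → ℝ → ℝ)
    (hp0 : ∀ x, p 0 x = 1)
    (hp1 : ∀ x, p 1 x = x)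
    (hrec : ∀ (n : ℕ) (x : ℝ),
      ((n : ℝ) + 2) * p (n + 2) x
        = (2 * (n : ℝ) + 3) * x * p (n + 1) x - ((n : ℝ) + 1) * p n x)
    (P : ℕ → ℝ → ℝ)
    (hP : ∀ k x, P k x = Real.sqrt ((k : ℝ) + 1/2) * p k x)
    (ℓ : ℕ) (f : ℝ → ℝ)
    (hf : ContDiffOn ℝ ℓ f (Set.Icc (-1 : ℝ) 1))
    (α : ℕ → ℝ)
    (hα : ∀ k, α k = (1/2) * ∫ x in (-1 : ℝ)..1, f x * P k x) :
    Filter.Tendsto (fun k : ℕ => α k * (k : ℝ) ^ ℓ) Filter.atTop (nhds 0) := by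
  have hpl : ∀ k x, p k x = l k x := by
    intro k
    induction k using Nat.strong_induction_on with
    | _ k ih =>
      match k with
      | 0 => intro x; rw [hp0]; simp [l, LP]
      | 1 => intro x; rw [hp1]; simp [l, LP]
      | (n+2) =>
        intro x
        have h1 := ih (n+1) (by omega) x
        have h0 := ih n (by omega) x
        have hne : ((n:ℝ)+2) ≠ 0 := by positivity
        have h3 : ((n:ℝ)+2) * p (n+2) x = ((n:ℝ)+2) * l (n+2) x := by
          linear_combination (hrec n x) - (l_rec n x) + (2*(n:ℝ)+3)*x*h1 - ((n:ℝ)+1)*h0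
        exact mul_left_cancel₀ hne h3
  have hbet : ∀ k, α k = 1/2 * (Real.sqrt ((k:ℝ)+1/2) * bet f k) := by
    intro k
    rw [hα k]
    congr 1
    rw [show Real.sqrt ((k:ℝ)+1/2) * bet f k
        = ∫ x in (-1:ℝ)..1, Real.sqrt ((k:ℝ)+1/2) * (f x * l k x) from
      (intervalIntegral.integral_const_mul _ _).symm]
    apply intervalIntegral.integral_congr
    intro x _
    show f x * P k x = Real.sqrt ((k:ℝ)+1/2) * (f x * l k x)
    rw [hP, hpl]
    ring
  have T := main_decay ℓ f hf
  apply squeeze_zero_norm' (a := fun k : ℕ => Real.sqrt 2/2 * |bet f k * (k:ℝ)^ℓ * Real.sqrt k|)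
  · filter_upwards [eventually_ge_atTop 1] with k hk
    have hk1 : (1:ℝ) ≤ (k:ℝ) := by exact_mod_cast hk
    rw [hbet k]
    have hsq : Real.sqrt ((k:ℝ)+1/2) ≤ Real.sqrt 2 * Real.sqrt (k:ℝ) := by
      rw [← Real.sqrt_mul (by norm_num)]
      exact sqrt_le_sqrt' (by linarith)
    have e1 : ‖1/2 * (Real.sqrt ((k:ℝ)+1/2) * bet f k) * (k:ℝ)^ℓ‖
        = 1/2 * Real.sqrt ((k:ℝ)+1/2) * (|bet f k| * (k:ℝ)^ℓ) := by
      rw [Real.norm_eq_abs, abs_mul, abs_mul, abs_mul,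
        abs_of_nonneg (Real.sqrt_nonneg _),
        abs_of_nonneg (by positivity : (0:ℝ) ≤ (k:ℝ)^ℓ),
        abs_of_nonneg (by norm_num : (0:ℝ) ≤ (1:ℝ)/2)]
      ring
    rw [e1]
    have e2 : Real.sqrt 2/2 * |bet f k * (k:ℝ)^ℓ * Real.sqrt (k:ℝ)|
        = 1/2 * (Real.sqrt 2 * Real.sqrt (k:ℝ)) * (|bet f k| * (k:ℝ)^ℓ) := by
      rw [abs_mul, abs_mul,
        abs_of_nonneg (by positivity : (0:ℝ) ≤ (k:ℝ)^ℓ),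
        abs_of_nonneg (Real.sqrt_nonneg _)]
      ring
    rw [e2]
    apply mul_le_mul_of_nonneg_right _ (by positivity)
    apply mul_le_mul_of_nonneg_left hsq (by norm_num)
  · have h := T.abs.const_mul (Real.sqrt 2/2)
    simpa using h
end

section
/- Let F: D ⊂ ℝ^n → ℝ^n be continuously differentiable on the open set D, and suppose there exist an open ball B(x^0, r) ⊂ D and γ > 0 such that ‖(∇F(x))^{-1}‖ ≤ γ for all x ∈ B(x^0, r) and r > γ ‖F(x^0)‖. Then F(x) = 0 has a solution in B(x^0, r). -/
open Metric Set

/-- Quantitative Newton-type existence lemma: if `F` is `C¹` on an open set `D`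
containing a ball `B(x₀,r)`, the derivative is invertible with inverse bounded
by `γ` on the ball, and `r > γ‖F x₀‖`, then `F` has a zero in the ball. -/
theorem newton_existence
    {n : ℕ} (F : EuclideanSpace ℝ (Fin n) → EuclideanSpace ℝ (Fin n))
    (D : Set (EuclideanSpace ℝ (Fin n))) (hD : IsOpen D)
    (hF : ContDiffOn ℝ 1 F D)
    (x₀ : EuclideanSpace ℝ (Fin n)) (r γ : ℝ) (hγ : 0 < γ)
    (hball : ball x₀ r ⊆ D)
    (F' : EuclideanSpace ℝ (Fin n) →
      (EuclideanSpace ℝ (Fin n) ≃L[ℝ] EuclideanSpace ℝ (Fin n)))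
    (hF' : ∀ x ∈ ball x₀ r, HasFDerivAt F (F' x :
      EuclideanSpace ℝ (Fin n) →L[ℝ] EuclideanSpace ℝ (Fin n)) x)
    (hinv : ∀ x ∈ ball x₀ r, ‖((F' x).symm :
      EuclideanSpace ℝ (Fin n) →L[ℝ] EuclideanSpace ℝ (Fin n))‖ ≤ γ)
    (hr : r > γ * ‖F x₀‖) :
    ∃ x ∈ ball x₀ r, F x = 0 := by
  classical
  
  have hr0 : 0 < r := lt_of_le_of_lt (by positivity) hr
  by_cases hK : F x₀ = 0
  · exact ⟨x₀, mem_ball_self hr0, hK⟩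
  set K := ‖F x₀‖ with hKdef
  have hK0 : 0 < K := norm_pos_iff.mpr hK
  set γ' : ℝ := (γ + r / K) / 2 with hγ'def
  have hγltγ' : γ < γ' := by
    have : γ < r / K := (lt_div_iff₀ hK0).mpr (by linarith)
    simp only [hγ'def]; linarith
  have hγ'0 : 0 < γ' := lt_trans hγ hγltγ'
  have hγ'K : γ' * K < r := by
    have h1 : γ' * K = (γ * K + r) / 2 := by
      rw [hγ'def, div_mul_eq_mul_div, add_mul, div_mul_cancel₀ _ hK0.ne']
    rw [h1]; linarith
  -- the key set
  set C : Set (ℝ × EuclideanSpace ℝ (Fin n)) := Icc (0:ℝ) 1 ×ˢ closedBall x₀ (γ' * K) with hCdef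
  have hCcompact : IsCompact C := isCompact_Icc.prod (isCompact_closedBall _ _)
  have hCclosed : IsClosed C := isClosed_Icc.prod isClosed_closedBall
  have hsub : closedBall x₀ (γ' * K) ⊆ ball x₀ r :=
    closedBall_subset_ball hγ'K
  have hcont : ContinuousOn F (closedBall x₀ (γ' * K)) := fun x hx =>
    ((hF' x (hsub hx)).continuousAt).continuousWithinAt
  set T : Set (ℝ × EuclideanSpace ℝ (Fin n)) :=
    C ∩ {p | dist p.2 x₀ ≤ γ' * p.1 * K ∧ F p.2 = (1 - p.1) • F x₀} with hTdef
  have hT1 : IsClosed (C ∩ {p : ℝ × EuclideanSpace ℝ (Fin n) | F p.2 = (1 - p.1) • F x₀}) := by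
    have hφ : ContinuousOn (fun p : ℝ × EuclideanSpace ℝ (Fin n) => F p.2 - (1 - p.1) • F x₀) C := by
      apply ContinuousOn.sub
      · exact hcont.comp continuous_snd.continuousOn
          (fun p hp => (mem_prod.mp hp).2)
      · exact ((continuous_const.sub continuous_fst).smul continuous_const).continuousOn
    have := hφ.preimage_isClosed_of_isClosed hCclosed (isClosed_singleton (x := (0:EuclideanSpace ℝ (Fin n))))
    convert this using 1
    ext p
    simp [sub_eq_zero]
  have hTclosed : IsClosed T := by
    have h2 : IsClosed {p : ℝ × EuclideanSpace ℝ (Fin n) | dist p.2 x₀ ≤ γ' * p.1 * K} := by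
      apply isClosed_le
      · exact (continuous_snd.dist continuous_const)
      · exact (continuous_const.mul continuous_fst).mul continuous_const
    have : T = (C ∩ {p : ℝ × EuclideanSpace ℝ (Fin n) | F p.2 = (1 - p.1) • F x₀}) ∩
        {p : ℝ × EuclideanSpace ℝ (Fin n) | dist p.2 x₀ ≤ γ' * p.1 * K} := by
      ext p; simp [hTdef]; tauto
    rw [this]
    exact hT1.inter h2
  have hTcompact : IsCompact T :=
    hCcompact.of_isClosed_subset hTclosed inter_subset_left
  set S : Set ℝ := Prod.fst '' T with hSdef
  have hScompact : IsCompact S := hTcompact.image continuous_fst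
  have hSne : S.Nonempty := by
    refine ⟨0, ⟨(0, x₀), ?_, rfl⟩⟩
    constructor
    · exact ⟨⟨le_refl _, zero_le_one⟩, mem_closedBall_self (by positivity)⟩
    · constructor
      · simp
      · simp
  have htmem : sSup S ∈ S := hScompact.sSup_mem hSne
  set t₀ : ℝ := sSup S with ht₀def
  obtain ⟨⟨t₀', xb⟩, hpT, hpfst⟩ := htmem
  simp only at hpfst
  subst hpfst
  obtain ⟨⟨ht01 : t₀ ∈ Icc (0:ℝ) 1, hxbcb⟩, hdistxb, hFxb⟩ := hpT
  simp only at hdistxb hFxb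
  have hxbr : xb ∈ ball x₀ r := hsub hxbcb
  by_cases ht1 : t₀ = 1
  · refine ⟨xb, hxbr, ?_⟩
    rw [hFxb, ht1]; simp
  · exfalso
    have ht₀lt1 : t₀ < 1 := lt_of_le_of_ne ht01.2 ht1
    -- strict derivative at xb
    have hxbD : xb ∈ D := hball hxbr
    have hstrict : HasStrictFDerivAt F ((F' xb : EuclideanSpace ℝ (Fin n) →L[ℝ] EuclideanSpace ℝ (Fin n))) xb :=
      (hF.contDiffAt (hD.mem_nhds hxbD)).hasStrictFDerivAt' (hF' xb hxbr) one_ne_zero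
    -- choose the constant
    have hγ'inv : γ'⁻¹ < γ⁻¹ := by
      apply inv_strictAnti₀ hγ hγltγ'
    set c : NNReal := Real.toNNReal (γ⁻¹ - γ'⁻¹) with hcdef
    have hccoe : (c : ℝ) = γ⁻¹ - γ'⁻¹ := Real.coe_toNNReal _ (by linarith)
    have hc0 : 0 < c := Real.toNNReal_pos.mpr (by linarith)
    obtain ⟨s, hs_nhds, happrox⟩ := hstrict.approximates_deriv_on_nhds (Or.inr hc0)
    have hmem : s ∩ ball x₀ r ∈ nhds xb := Filter.inter_mem hs_nhds
      ((isOpen_ball).mem_nhds hxbr)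
    obtain ⟨ε₀, hε₀pos, hε₀sub⟩ := (Metric.nhds_basis_closedBall.mem_iff).mp hmem
    set d : ℝ := min (ε₀ / (γ' * K)) (1 - t₀) with hddef
    have hd0 : 0 < d := lt_min (by positivity) (by linarith)
    set t' : ℝ := t₀ + d with ht'def
    have ht'le1 : t' ≤ 1 := by
      have : d ≤ 1 - t₀ := min_le_right _ _
      simp only [ht'def]; linarith
    set ε₁ : ℝ := γ' * d * K with hε₁def
    have hε₁0 : 0 < ε₁ := by positivity
    have hε₁ε₀ : ε₁ ≤ ε₀ := by
      have h1 : d ≤ ε₀ / (γ' * K) := min_le_left _ _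
      have h2 : γ' * K > 0 := by positivity
      calc γ' * d * K = d * (γ' * K) := by ring
        _ ≤ (ε₀ / (γ' * K)) * (γ' * K) := by
            apply mul_le_mul_of_nonneg_right h1 (le_of_lt h2)
        _ = ε₀ := by field_simp
    have hcb_sub : closedBall xb ε₁ ⊆ s :=
      (closedBall_subset_closedBall hε₁ε₀).trans (hε₀sub.trans inter_subset_left)
    have happrox' := happrox.mono_set hcb_sub
    set f'symm := (F' xb).toNonlinearRightInverse with hf'symmdef
    have hsurj := happrox'.surjOn_closedBall_of_nonlinearRightInverse f'symm
      (le_of_lt hε₁0) (Subset.refl _)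
    -- the nonlinear right inverse norm bound
    have hnn : (f'symm.nnnorm : ℝ) ≤ γ := by
      have : (f'symm.nnnorm : ℝ) = ‖((F' xb).symm : EuclideanSpace ℝ (Fin n) →L[ℝ] EuclideanSpace ℝ (Fin n))‖ := rfl
      rw [this]; exact hinv xb hxbr
    have hnn0 : (0:ℝ) < (f'symm.nnnorm : ℝ) := by
      rcases lt_or_ge 0 ((f'symm.nnnorm : ℝ)) with h | h
      · exact h
      · exfalso
        have hz : ((F' xb).symm : EuclideanSpace ℝ (Fin n) →L[ℝ] EuclideanSpace ℝ (Fin n)) = 0 := by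
          have : ‖((F' xb).symm : EuclideanSpace ℝ (Fin n) →L[ℝ] EuclideanSpace ℝ (Fin n))‖ ≤ 0 := by
            have : (f'symm.nnnorm : ℝ) = ‖((F' xb).symm : EuclideanSpace ℝ (Fin n) →L[ℝ] EuclideanSpace ℝ (Fin n))‖ := rfl
            rw [← this]; exact h
          exact norm_le_zero_iff.mp this
        have : F x₀ = 0 := by
          have h1 : (F' xb).symm (F' xb (F x₀)) = F x₀ := (F' xb).symm_apply_apply _
          rw [show (F' xb).symm (F' xb (F x₀)) = ((F' xb).symm : EuclideanSpace ℝ (Fin n) →L[ℝ] EuclideanSpace ℝ (Fin n)) (F' xb (F x₀)) from rfl, hz] at h1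
          simpa using h1.symm
        exact hK this
    have hradius : (f'symm.nnnorm : ℝ)⁻¹ - (c : ℝ) ≥ γ'⁻¹ := by
      have h2 : γ⁻¹ ≤ (f'symm.nnnorm : ℝ)⁻¹ :=
        inv_anti₀ hnn0 hnn
      rw [hccoe]; linarith
    -- the target point
    set y : EuclideanSpace ℝ (Fin n) := (1 - t') • F x₀ with hydef
    have hytarget : y ∈ closedBall (F xb) (((f'symm.nnnorm : ℝ)⁻¹ - c) * ε₁) := by
      rw [mem_closedBall, dist_eq_norm, hydef, hFxb]
      have h1 : (1 - t') • F x₀ - (1 - t₀) • F x₀ = (-d) • F x₀ := by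
        rw [← sub_smul]; congr 1; rw [ht'def]; ring
      rw [h1]
      have h2 : ‖(-d) • F x₀‖ = d * K := by
        rw [norm_smul]; simp [abs_of_pos hd0, hKdef]
      rw [h2]
      calc d * K = γ'⁻¹ * ε₁ := by
            field_simp [hε₁def]; ring
        _ ≤ ((f'symm.nnnorm : ℝ)⁻¹ - c) * ε₁ := by
            apply mul_le_mul_of_nonneg_right hradius (le_of_lt hε₁0)
    obtain ⟨x', hx'cb, hFx'⟩ := hsurj hytarget
    -- now t' ∈ S
    have hdistx' : dist x' x₀ ≤ γ' * t' * K := by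
      calc dist x' x₀ ≤ dist x' xb + dist xb x₀ := dist_triangle _ _ _
        _ ≤ ε₁ + γ' * t₀ * K := add_le_add (mem_closedBall.mp hx'cb) hdistxb
        _ = γ' * t' * K := by rw [hε₁def, ht'def]; ring
    have ht'S : t' ∈ S := by
      refine ⟨(t', x'), ⟨⟨⟨by linarith [ht01.1, hd0.le], ht'le1⟩, ?_⟩, hdistx', hFx'⟩, rfl⟩
      · rw [mem_closedBall]
        calc dist x' x₀ ≤ γ' * t' * K := hdistx'
          _ ≤ γ' * 1 * K := by
              apply mul_le_mul_of_nonneg_right _ hK0.le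
              exact mul_le_mul_of_nonneg_left ht'le1 hγ'0.le
          _ = γ' * K := by ring
    have : t' ≤ t₀ := le_csSup hScompact.bddAbove ht'S
    linarith
end

section
/- Let f ∈ C^1([-1,1]) with f(θ†) = 0 and f'(θ†) ≠ 0 for some θ† ∈ (-1,1), and let (f_M) be a sequence of continuously differentiable functions with ‖f_M − f‖_∞ → 0 and ‖f'_M − f'‖_∞ → 0. Then for all sufficiently large M there exists θ*_M ∈ (-1,1) minimizing f_M^2 over [-1,1], and θ*_M → θ† with f_M(θ*_M) → 0 as M → ∞. -/
open Filter

/-- One-dimensional convergence of approximate least-squares minimizers: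
if `f ∈ C¹([-1,1])` has a nondegenerate zero `θ† ∈ (-1,1)` and `f_M → f`,
`f'_M → f'` uniformly on `[-1,1]`, then for large `M` there are global
minimizers `θ*_M` of `f_M²` on `[-1,1]` lying in `(-1,1)`, with
`θ*_M → θ†` and `f_M(θ*_M) → 0`. -/
theorem one_dim_ls_minimizer_convergence
    (f : ℝ → ℝ) (θd : ℝ)
    (hf : ContDiffOn ℝ 1 f (Set.Icc (-1 : ℝ) 1))
    (hθ : θd ∈ Set.Ioo (-1 : ℝ) 1)
    (hroot : f θd = 0)
    (hderiv : derivWithin f (Set.Icc (-1 : ℝ) 1) θd ≠ 0)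
    (fM : ℕ → ℝ → ℝ)
    (hfM : ∀ M, ContDiff ℝ 1 (fM M))
    (hconv : TendstoUniformlyOn fM f atTop (Set.Icc (-1 : ℝ) 1))
    (hconv' : TendstoUniformlyOn (fun M => deriv (fM M))
      (derivWithin f (Set.Icc (-1 : ℝ) 1)) atTop (Set.Icc (-1 : ℝ) 1)) :
    ∃ (N : ℕ) (θs : ℕ → ℝ),
      (∀ M ≥ N, θs M ∈ Set.Ioo (-1 : ℝ) 1 ∧
        IsMinOn (fun θ => (fM M θ) ^ 2) (Set.Icc (-1 : ℝ) 1) (θs M)) ∧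
      Tendsto θs atTop (nhds θd) ∧
      Tendsto (fun M => fM M (θs M)) atTop (nhds 0) := by
  set a := derivWithin f (Set.Icc (-1 : ℝ) 1) θd with ha_def
  set r₀ : ℝ := min (θd + 1) (1 - θd) with hr₀_def
  have hr₀ : 0 < r₀ := lt_min (by linarith [hθ.1]) (by linarith [hθ.2])
  have hball : ∀ x : ℝ, |x - θd| < r₀ → x ∈ Set.Ioo (-1 : ℝ) 1 := by
    intro x hx
    rw [abs_lt] at hx
    have h1 : r₀ ≤ θd + 1 := min_le_left _ _
    have h2 : r₀ ≤ 1 - θd := min_le_right _ _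
    exact ⟨by linarith [hx.1], by linarith [hx.2]⟩
  -- basic derivative facts
  have hIcc : Set.Icc (-1 : ℝ) 1 ∈ nhds θd := Icc_mem_nhds hθ.1 hθ.2
  have hdiff : DifferentiableAt ℝ f θd :=
    ((hf.differentiableOn one_ne_zero) θd (Set.Ioo_subset_Icc_self hθ)).differentiableAt hIcc
  have hda : HasDerivAt f a θd := by
    have h := derivWithin_of_mem_nhds (f := f) hIcc
    rw [ha_def, h]
    exact hdiff.hasDerivAt
  have hslope : Tendsto (slope f θd) (nhdsWithin θd {θd}ᶜ) (nhds a) :=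
    hasDerivAt_iff_tendsto_slope.1 hda
  -- sign of slope near θd
  have hev : ∀ᶠ x in nhdsWithin θd {θd}ᶜ, slope f θd x * a > 0 := by
    have hb : Metric.ball a (|a|) ∈ nhds a := Metric.ball_mem_nhds _ (abs_pos.2 hderiv)
    filter_upwards [hslope hb] with x hx
    simp only [Set.mem_preimage, Metric.mem_ball, Real.dist_eq] at hx
    rw [abs_lt] at hx
    rcases lt_or_gt_of_ne hderiv with h | h
    · rw [abs_of_neg h] at hx; nlinarith [hx.1, hx.2]
    · rw [abs_of_pos h] at hx; nlinarith [hx.1, hx.2]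
  -- key: for small r, eventually fM has a zero within r of θd
  have key : ∀ r : ℝ, 0 < r → r ≤ r₀ →
      ∃ N : ℕ, ∀ M ≥ N, ∃ z ∈ Set.Icc (-1 : ℝ) 1, fM M z = 0 ∧ |z - θd| < r := by
    intro r hr hrr₀
    -- pick sign points on each side of θd
    have hevR : ∀ᶠ x in nhdsWithin θd (Set.Ioi θd), slope f θd x * a > 0 :=
      hev.filter_mono (nhdsWithin_mono _ (fun x hx => ne_of_gt hx))
    have hevL : ∀ᶠ x in nhdsWithin θd (Set.Iio θd), slope f θd x * a > 0 :=
      hev.filter_mono (nhdsWithin_mono _ (fun x hx => ne_of_lt hx))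
    have hmemR : Set.Ioo θd (θd + r) ∈ nhdsWithin θd (Set.Ioi θd) :=
      Ioo_mem_nhdsGT_of_mem ⟨le_rfl, by linarith⟩
    have hmemL : Set.Ioo (θd - r) θd ∈ nhdsWithin θd (Set.Iio θd) :=
      Ioo_mem_nhdsLT_of_mem ⟨by linarith, le_rfl⟩
    obtain ⟨xp, hxp_slope, hxp_mem⟩ :=
      (hevR.and (eventually_of_mem hmemR (fun x hx => hx))).exists
    obtain ⟨xm, hxm_slope, hxm_mem⟩ :=
      (hevL.and (eventually_of_mem hmemL (fun x hx => hx))).exists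
    -- slope sign → function sign
    have hfp : f xp * a > 0 := by
      have hx0 : (0:ℝ) < xp - θd := sub_pos.2 hxp_mem.1
      have hs : slope f θd xp = f xp / (xp - θd) := by
        rw [slope_def_field, hroot, sub_zero]
      rw [hs] at hxp_slope
      have h1 := mul_pos hxp_slope hx0
      have h2 : f xp / (xp - θd) * a * (xp - θd) = f xp * a := by
        field_simp
      rwa [h2] at h1
    have hfm : f xm * a < 0 := by
      have hx0 : xm - θd < 0 := sub_neg.2 hxm_mem.2
      have hs : slope f θd xm = f xm / (xm - θd) := by
        rw [slope_def_field, hroot, sub_zero]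
      rw [hs] at hxm_slope
      have h1 := mul_neg_of_pos_of_neg hxm_slope hx0
      have h2 : f xm / (xm - θd) * a * (xm - θd) = f xm * a := by
        field_simp
        exact mul_div_cancel_right₀ _ (ne_of_lt hx0)
      rwa [h2] at h1
    have hopp : f xm * f xp < 0 := by
      nlinarith [mul_neg_of_neg_of_pos hfm hfp, mul_self_pos.2 hderiv]
    have hfp0 : f xp ≠ 0 := fun h => by simp [h] at hfp
    have hfm0 : f xm ≠ 0 := fun h => by simp [h] at hfm
    set ε : ℝ := min |f xm| |f xp| with hε_def
    have hε : 0 < ε := lt_min (abs_pos.2 hfm0) (abs_pos.2 hfp0)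
    -- memberships
    have hxpI : xp ∈ Set.Icc (-1 : ℝ) 1 := by
      apply Set.Ioo_subset_Icc_self (hball xp _)
      rw [abs_lt]
      constructor <;> [linarith [hxp_mem.1]; linarith [hxp_mem.2]]
    have hxmI : xm ∈ Set.Icc (-1 : ℝ) 1 := by
      apply Set.Ioo_subset_Icc_self (hball xm _)
      rw [abs_lt]
      constructor <;> [linarith [hxm_mem.1]; linarith [hxm_mem.2]]
    obtain ⟨N, hN⟩ := eventually_atTop.1 ((Metric.tendstoUniformlyOn_iff.1 hconv) ε hε)
    refine ⟨N, fun M hM => ?_⟩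
    have hdp := hN M hM xp hxpI
    have hdm := hN M hM xm hxmI
    rw [Real.dist_eq, abs_lt] at hdp hdm
    have hεp : ε ≤ |f xp| := min_le_right _ _
    have hεm : ε ≤ |f xm| := min_le_left _ _
    have hsp : fM M xp * f xp > 0 := by
      rcases lt_trichotomy (f xp) 0 with h | h | h
      · rw [abs_of_neg h] at hεp; nlinarith [hdp.1, hdp.2]
      · exact absurd h hfp0
      · rw [abs_of_pos h] at hεp; nlinarith [hdp.1, hdp.2]
    have hsm : fM M xm * f xm > 0 := by
      rcases lt_trichotomy (f xm) 0 with h | h | h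
      · rw [abs_of_neg h] at hεm; nlinarith [hdm.1, hdm.2]
      · exact absurd h hfm0
      · rw [abs_of_pos h] at hεm; nlinarith [hdm.1, hdm.2]
    have hMopp : fM M xm * fM M xp < 0 := by
      nlinarith [mul_pos hsm hsp, hopp]
    have hxmp : xm < xp := lt_trans hxm_mem.2 hxp_mem.1
    have hcont : ContinuousOn (fM M) (Set.Icc xm xp) := (hfM M).continuous.continuousOn
    have hzero : ∃ z ∈ Set.Ioo xm xp, fM M z = 0 := by
      rcases mul_neg_iff.1 hMopp with ⟨h1, h2⟩ | ⟨h1, h2⟩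
      · obtain ⟨z, hz, hz0⟩ := intermediate_value_Ioo' hxmp.le hcont ⟨h2, h1⟩
        exact ⟨z, hz, hz0⟩
      · obtain ⟨z, hz, hz0⟩ := intermediate_value_Ioo hxmp.le hcont ⟨h1, h2⟩
        exact ⟨z, hz, hz0⟩
    obtain ⟨z, hz, hz0⟩ := hzero
    have hzr : |z - θd| < r := by
      rw [abs_lt]
      constructor <;> [linarith [hz.1, hxm_mem.1]; linarith [hz.2, hxp_mem.2]]
    exact ⟨z, Set.Ioo_subset_Icc_self (hball z (lt_of_lt_of_le hzr hrr₀)), hz0, hzr⟩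
  -- nearest-zero selection
  have hZ : ∀ M : ℕ, ∃ t : ℝ,
      (∃ z ∈ Set.Icc (-1 : ℝ) 1, fM M z = 0) →
      (fM M t = 0 ∧ ∀ z ∈ Set.Icc (-1 : ℝ) 1, fM M z = 0 → |t - θd| ≤ |z - θd|) := by
    intro M
    by_cases h : ∃ z ∈ Set.Icc (-1 : ℝ) 1, fM M z = 0
    · obtain ⟨z, hzI, hz0⟩ := h
      have hK : IsCompact (Set.Icc (-1 : ℝ) 1 ∩ (fM M) ⁻¹' {0}) :=
        isCompact_Icc.inter_right (isClosed_singleton.preimage (hfM M).continuous)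
      have hne : (Set.Icc (-1 : ℝ) 1 ∩ (fM M) ⁻¹' {0}).Nonempty :=
        ⟨z, hzI, by simpa using hz0⟩
      obtain ⟨t, htK, htmin⟩ := hK.exists_isMinOn hne
        ((continuous_id.sub continuous_const).abs.continuousOn :
          ContinuousOn (fun x : ℝ => |x - θd|) _)
      refine ⟨t, fun _ => ⟨by simpa using htK.2, fun w hwI hw0 => ?_⟩⟩
      exact htmin ⟨hwI, by simpa using hw0⟩
    · exact ⟨θd, fun h' => absurd h' h⟩
  choose θs hθs using hZ
  obtain ⟨N, hN⟩ := key r₀ hr₀ le_rfl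
  have hgood : ∀ M ≥ N, fM M (θs M) = 0 ∧ |θs M - θd| < r₀ := by
    intro M hM
    obtain ⟨z, hzI, hz0, hzr⟩ := hN M hM
    obtain ⟨ht0, htmin⟩ := hθs M ⟨z, hzI, hz0⟩
    exact ⟨ht0, lt_of_le_of_lt (htmin z hzI hz0) hzr⟩
  refine ⟨N, θs, ?_, ?_, ?_⟩
  · intro M hM
    obtain ⟨ht0, htr⟩ := hgood M hM
    refine ⟨hball _ htr, ?_⟩
    rw [isMinOn_iff]
    intro x hx
    show (fM M (θs M)) ^ 2 ≤ (fM M x) ^ 2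
    rw [ht0]
    simpa using sq_nonneg (fM M x)
  · rw [Metric.tendsto_atTop]
    intro δ hδ
    obtain ⟨N', hN'⟩ := key (min δ r₀) (lt_min hδ hr₀) (min_le_right _ _)
    refine ⟨N', fun M hM => ?_⟩
    obtain ⟨z, hzI, hz0, hzr⟩ := hN' M hM
    obtain ⟨ht0, htmin⟩ := hθs M ⟨z, hzI, hz0⟩
    rw [Real.dist_eq]
    exact lt_of_le_of_lt (htmin z hzI hz0) (lt_of_lt_of_le hzr (min_le_left _ _))
  · have hEq : (fun _ : ℕ => (0:ℝ)) =ᶠ[atTop] fun M => fM M (θs M) :=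
      eventually_atTop.2 ⟨N, fun M hM => ((hgood M hM).1).symm⟩
    exact Tendsto.congr' hEq tendsto_const_nhds
end

section
/- Let f_1, …, f_K ∈ Γ^M_N be linearly independent with K > max{N, (M+1)^{N−1}}. Then the vectors D_{θ_1}f, …, D_{θ_N}f ∈ (Γ^M_N)^K, where f = (f_1,…,f_K), are linearly independent; consequently the polynomial θ ↦ det(J(θ)^T J(θ)) is not identically zero, where J(θ) is the K×N Jacobian matrix (∂f_i/∂θ_j)(θ), and the set {θ ∈ ℝ^N : rank J(θ) ≤ N−1} is nowhere dense in ℝ^N. -/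
open MvPolynomial Matrix

/-- `Γ^M_N`: the span of the monomials `θ₁^{k₁}⋯θ_N^{k_N}` with `0 ≤ kᵢ ≤ M`. -/
noncomputable def GammaMN (N M : ℕ) : Submodule ℝ (MvPolynomial (Fin N) ℝ) :=
  Submodule.span ℝ
    {q | ∃ k : Fin N → ℕ, (∀ i, k i ≤ M) ∧ q = ∏ i, (X i : MvPolynomial (Fin N) ℝ) ^ k i}



lemma digits_inj : ∀ {n B : ℕ} (g h : Fin n → ℕ), (∀ i, g i < B) → (∀ i, h i < B) →
    (∑ i, g i * B ^ (i : ℕ)) = (∑ i, h i * B ^ (i : ℕ)) → g = h := by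
  intro n
  induction n with
  | zero => intro B g h _ _ _; funext i; exact i.elim0
  | succ n ih =>
    intro B g h hg hh hsum
    have hB : 0 < B := Nat.pos_of_ne_zero (by rintro rfl; exact Nat.not_lt_zero _ (hg 0))
    rw [Fin.sum_univ_succ, Fin.sum_univ_succ] at hsum
    simp only [Fin.val_succ, Fin.val_zero, pow_succ, pow_zero, mul_one] at hsum
    have hre : ∀ (k : Fin n → ℕ), (∑ i : Fin n, k i * (B ^ (i:ℕ) * B)) = B * ∑ i : Fin n, k i * B ^ (i:ℕ) := by
      intro k; rw [Finset.mul_sum]; congr 1; funext i; ring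
    rw [hre, hre] at hsum
    have h0 : g 0 = h 0 := by
      have := congrArg (· % B) hsum
      simpa [Nat.add_mul_mod_self_left, Nat.mod_eq_of_lt (hg 0), Nat.mod_eq_of_lt (hh 0)] using this
    have htail : (fun i : Fin n => g i.succ) = (fun i => h i.succ) := by
      apply ih _ _ (fun i => hg i.succ) (fun i => hh i.succ)
      exact Nat.eq_of_mul_eq_mul_left hB (by omega)
    funext i
    refine Fin.cases h0 (fun j => ?_) i
    exact congrFun htail j

noncomputable def Wt (B : ℕ) {N : ℕ} (m : Fin N →₀ ℕ) : ℕ := ∑ i, m i * B ^ (i : ℕ)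

lemma Wt_add {B N : ℕ} (m n : Fin N →₀ ℕ) : Wt B (m + n) = Wt B m + Wt B n := by
  simp [Wt, Finsupp.add_apply, add_mul, Finset.sum_add_distrib]

lemma Wt_single {B N : ℕ} (j : Fin N) : Wt B (Finsupp.single j 1) = B ^ (j : ℕ) := by
  rw [Wt, Finset.sum_eq_single j]
  · simp
  · intro b _ hb; simp [Finsupp.single_apply, Ne.symm hb]
  · simp

lemma Wt_inj {B N : ℕ} {m n : Fin N →₀ ℕ} (hm : ∀ i, m i < B) (hn : ∀ i, n i < B)
    (h : Wt B m = Wt B n) : m = n := by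
  have := digits_inj (fun i => m i) (fun i => n i) hm hn h
  ext i; exact congrFun this i

lemma coeff_pderiv {N : ℕ} (i : Fin N) (p : MvPolynomial (Fin N) ℝ) (u : Fin N →₀ ℕ) :
    coeff u (pderiv i p) = ((u i : ℝ) + 1) * coeff (u + Finsupp.single i 1) p := by
  induction p using MvPolynomial.induction_on' with
  | monomial s a =>
    rw [pderiv_monomial, coeff_monomial, coeff_monomial]
    by_cases h : s = u + Finsupp.single i 1
    · subst h
      rw [if_pos (add_tsub_cancel_right _ _), if_pos rfl]
      simp only [Finsupp.add_apply, Finsupp.single_apply, if_pos rfl]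
      push_cast
      ring
    · rw [if_neg h]
      by_cases h2 : s - Finsupp.single i 1 = u
      · by_cases h3 : Finsupp.single i 1 ≤ s
        · exact absurd (by rw [← h2, tsub_add_cancel_of_le h3]) (Ne.symm h)
        · have hsi : s i = 0 := by
            rw [Finsupp.single_le_iff] at h3; omega
          rw [if_pos h2]
          simp [hsi]
      · rw [if_neg h2, mul_zero]
  | add p q hp hq =>
    rw [map_add, coeff_add, coeff_add, hp, hq, mul_add]

lemma prod_X_pow_eq {N : ℕ} (k : Fin N → ℕ) :
    (∏ i, (X i : MvPolynomial (Fin N) ℝ) ^ k i) = monomial (Finsupp.equivFunOnFinite.symm k) 1 := by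
  rw [monomial_eq, C_1, one_mul, Finsupp.prod_fintype]
  · simp [Finsupp.equivFunOnFinite]; rfl
  · intro i; rw [pow_zero]

lemma gamma_box {N M : ℕ} {p : MvPolynomial (Fin N) ℝ} (hp : p ∈ GammaMN N M) :
    ∀ m ∈ p.support, ∀ i, m i ≤ M := by
  classical
  set Box : Submodule ℝ (MvPolynomial (Fin N) ℝ) :=
    { carrier := {p | ∀ m ∈ p.support, ∀ i, m i ≤ M}
      add_mem' := by
        intro a b ha hb m hm i
        by_cases hma : m ∈ a.support
        · exact ha m hma i
        · apply hb m _ i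
          rw [MvPolynomial.mem_support_iff] at hm ⊢
          rw [MvPolynomial.notMem_support_iff] at hma
          rwa [coeff_add, hma, zero_add] at hm
      zero_mem' := by intro m hm i; simp at hm
      smul_mem' := by
        intro r a ha m hm i
        apply ha m _ i
        rw [MvPolynomial.mem_support_iff] at hm ⊢
        intro h0
        rw [coeff_smul, h0, smul_zero] at hm
        exact hm rfl } with hBox
  have hle : GammaMN N M ≤ Box := by
    rw [GammaMN, Submodule.span_le]
    rintro q ⟨k, hk, rfl⟩
    intro m hm i
    rw [prod_X_pow_eq, support_monomial, if_neg (one_ne_zero)] at hm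
    rw [Finset.mem_singleton] at hm
    subst hm
    simpa [Finsupp.equivFunOnFinite] using hk i
  exact hle hp


noncomputable def DOp {N : ℕ} (c : Fin N → MvPolynomial (Fin N) ℝ) :
    MvPolynomial (Fin N) ℝ →ₗ[ℝ] MvPolynomial (Fin N) ℝ where
  toFun p := ∑ i, c i * (pderiv i p)
  map_add' p q := by simp [mul_add, Finset.sum_add_distrib]
  map_smul' r p := by
    simp only [Derivation.map_smul, RingHom.id_apply, Finset.smul_sum, mul_smul_comm]

lemma DOp_apply {N : ℕ} (c : Fin N → MvPolynomial (Fin N) ℝ) (p : MvPolynomial (Fin N) ℝ) :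
    DOp c p = ∑ i, c i * (pderiv i p) := rfl

lemma ker_bound {N M : ℕ} (c : Fin N → MvPolynomial (Fin N) ℝ) (i0 : Fin N) (hc : c i0 ≠ 0) :
    FiniteDimensional ℝ ↥(GammaMN N M ⊓ LinearMap.ker (DOp c)) ∧
      Module.finrank ℝ ↥(GammaMN N M ⊓ LinearMap.ker (DOp c)) ≤ (M + 1) ^ (N - 1) := by
  classical
  set V := GammaMN N M ⊓ LinearMap.ker (DOp c) with hV
  obtain ⟨Mc, hMc⟩ : ∃ Mc : ℕ, ∀ j : Fin N, ∀ m ∈ (c j).support, ∀ i, m i ≤ Mc := by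
    refine ⟨Finset.univ.sup (fun j : Fin N =>
      (c j).support.sup (fun m => Finset.univ.sup (fun i => m i))), ?_⟩
    intro j m hm i
    calc m i ≤ Finset.univ.sup (fun i => m i) := Finset.le_sup (Finset.mem_univ i)
      _ ≤ (c j).support.sup (fun m => Finset.univ.sup (fun i => m i)) :=
          Finset.le_sup (f := fun m : Fin N →₀ ℕ => Finset.univ.sup fun i => m i) hm
      _ ≤ _ := Finset.le_sup (f := fun j : Fin N =>
          (c j).support.sup fun m => Finset.univ.sup fun i => m i) (Finset.mem_univ j)
  set B : ℕ := M + Mc + 2 with hBdef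
  set s : Finset ((_ : Fin N) × (Fin N →₀ ℕ)) := Finset.univ.sigma (fun j => (c j).support)
    with hs
  have hsne : s.Nonempty := by
    obtain ⟨m0, hm0⟩ := MvPolynomial.support_nonempty.2 hc
    exact ⟨⟨i0, m0⟩, Finset.mem_sigma.2 ⟨Finset.mem_univ _, hm0⟩⟩
  set S : ℕ := ∑ k : Fin N, B ^ (k : ℕ) with hS
  have hBS : ∀ j : Fin N, B ^ (j : ℕ) ≤ S := by
    intro j
    rw [hS]
    exact Finset.single_le_sum (f := fun k : Fin N => B ^ (k : ℕ))
      (fun _ _ => Nat.zero_le _) (Finset.mem_univ j)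
  obtain ⟨⟨istar, mstar⟩, hmem, hmax0⟩ :=
    Finset.exists_max_image s (fun x => Wt B x.2 + (S - B ^ (x.1 : ℕ))) hsne
  have hmstar : mstar ∈ (c istar).support := (Finset.mem_sigma.1 hmem).2
  have hmax : ∀ j : Fin N, ∀ m ∈ (c j).support,
      Wt B m + B ^ (istar : ℕ) ≤ Wt B mstar + B ^ (j : ℕ) := by
    intro j m hm
    have h1 := hmax0 ⟨j, m⟩ (Finset.mem_sigma.2 ⟨Finset.mem_univ _, hm⟩)
    have h2 := hBS j; have h3 := hBS istar
    simp only at h1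
    omega
  set e : Fin N → (Fin N →₀ ℕ) := fun j => Finsupp.single j 1 with he
  set a : Fin N → ℝ :=
    fun j => if e istar ≤ mstar + e j then (c j).coeff (mstar + e j - e istar) else 0 with ha
  have hastar : a istar ≠ 0 := by
    rw [ha]; simp only
    rw [if_pos le_add_self, add_tsub_cancel_right]
    exact MvPolynomial.mem_support_iff.1 hmstar
  -- main claim: every nonzero element of V has a supported exponent annihilated by a
  have main : ∀ p, p ∈ V → p ≠ 0 → ∃ m ∈ p.support, (∑ j, a j * ((m j : ℕ) : ℝ)) = 0 := by
    intro p hpV hp0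
    obtain ⟨hpΓ, hpker'⟩ := Submodule.mem_inf.1 hpV
    have hbox := gamma_box hpΓ
    have hker : (∑ i, c i * (pderiv i p)) = 0 := by
      have := LinearMap.mem_ker.1 hpker'
      rwa [DOp_apply] at this
    obtain ⟨μ, hμ, hμmax⟩ :=
      Finset.exists_max_image p.support (Wt B) (MvPolynomial.support_nonempty.2 hp0)
    refine ⟨μ, hμ, ?_⟩
    have hboxB : ∀ ν ∈ p.support, ∀ i, ν i < B := fun ν hν i => by
      have := hbox ν hν i; omega
    have key : ∀ (j : Fin N) (x y : Fin N →₀ ℕ), x ∈ (c j).support → y + e j ∈ p.support →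
        x + (y + e j) + e istar = μ + mstar + e j →
        (y + e j = μ ∧ x + e istar = mstar + e j) := by
      intro j x y hx hy heq
      have h1 : Wt B (y + e j) ≤ Wt B μ := hμmax _ hy
      have h2 := hmax j x hx
      have hW := congrArg (Wt B) heq
      have hWsingle : ∀ k : Fin N, Wt B (e k) = B ^ (k : ℕ) := fun k => by
        rw [he]; exact Wt_single k
      have hWν : Wt B (y + e j) = Wt B μ := by
        simp only [Wt_add, hWsingle] at hW h1 ⊢
        omega
      have hνμ : y + e j = μ := Wt_inj (hboxB _ hy) (hboxB _ hμ) hWν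
      refine ⟨hνμ, ?_⟩
      rw [hνμ] at heq
      have h3 : x + e istar + μ = mstar + e j + μ := by
        rw [add_right_comm x μ (e istar)] at heq
        rw [heq, add_comm μ mstar, add_right_comm]
      exact add_right_cancel h3
    by_cases hA : e istar ≤ μ + mstar
    · -- main case: extract the coefficient at w
      set w : Fin N →₀ ℕ := μ + mstar - e istar with hw
      have hwadd : w + e istar = μ + mstar := tsub_add_cancel_of_le hA
      have h0 : coeff w (∑ i, c i * (pderiv i p)) = 0 := by rw [hker, coeff_zero]
      rw [coeff_sum] at h0
      have hterm : ∀ j : Fin N,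
          coeff w (c j * (pderiv j p)) = a j * ((μ j : ℕ) : ℝ) * coeff μ p := by
        intro j
        rw [coeff_mul]
        have hterm0 : ∀ b : (Fin N →₀ ℕ) × (Fin N →₀ ℕ), b ∈ Finset.HasAntidiagonal.antidiagonal w →
            (c j).coeff b.1 * coeff b.2 (pderiv j p) ≠ 0 →
            (b.2 + e j = μ ∧ b.1 + e istar = mstar + e j) := by
          intro b hb hne
          rw [_root_.coeff_pderiv] at hne
          have hx : (c j).coeff b.1 ≠ 0 := fun h => hne (by rw [h, zero_mul])
          have hy : coeff (b.2 + Finsupp.single j 1) p ≠ 0 := fun h => hne (by rw [h, mul_zero, mul_zero])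
          have hadd : b.1 + b.2 = w := Finset.HasAntidiagonal.mem_antidiagonal.1 hb
          refine key j b.1 b.2 (MvPolynomial.mem_support_iff.2 hx)
            (MvPolynomial.mem_support_iff.2 hy) ?_
          have : b.1 + (b.2 + e j) + e istar = (b.1 + b.2) + e istar + e j := by abel
          rw [this, hadd, hwadd]
        by_cases hj2 : e istar ≤ mstar + e j
        · by_cases hj1 : 1 ≤ μ j
          · set pr : (Fin N →₀ ℕ) × (Fin N →₀ ℕ) := (mstar + e j - e istar, μ - e j) with hpr
            have hpr1 : pr.1 + e istar = mstar + e j := tsub_add_cancel_of_le hj2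
            have hpr2 : pr.2 + e j = μ := by
              refine tsub_add_cancel_of_le ?_
              rw [he, Finsupp.single_le_iff]; exact hj1
            have hprmem : pr.1 + pr.2 = w := by
              have h4 : pr.1 + pr.2 + e istar + e j = w + e istar + e j := by
                rw [hwadd]
                calc pr.1 + pr.2 + e istar + e j = (pr.1 + e istar) + (pr.2 + e j) := by abel
                  _ = (mstar + e j) + μ := by rw [hpr1, hpr2]
                  _ = μ + mstar + e j := by abel
              exact add_right_cancel (add_right_cancel h4)
            rw [Finset.sum_eq_single pr]
            · rw [_root_.coeff_pderiv]
              have h2j : ((pr.2 j : ℕ) : ℝ) + 1 = ((μ j : ℕ) : ℝ) := by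
                have := DFunLike.congr_fun hpr2 j
                rw [Finsupp.add_apply, he, Finsupp.single_apply, if_pos rfl] at this
                push_cast [← this]
                ring
              rw [hpr2, h2j]
              have haj : a j = (c j).coeff pr.1 := by rw [ha]; simp only; rw [if_pos hj2]
              rw [haj]
              ring
            · intro b hb hbne
              by_contra hne
              obtain ⟨hb2, hb1⟩ := hterm0 b hb hne
              apply hbne
              have e2 : b.2 = pr.2 := by
                apply add_right_cancel (b := e j)
                rw [hb2, hpr2]
              have e1 : b.1 = pr.1 := by
                apply add_right_cancel (b := b.2)
                rw [Finset.HasAntidiagonal.mem_antidiagonal.1 hb, ← hprmem, e2]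
              exact Prod.ext e1 e2
            · intro hnot
              exact absurd (Finset.HasAntidiagonal.mem_antidiagonal.2 hprmem) hnot
          · -- μ j = 0
            have hμj : ((μ j : ℕ) : ℝ) = 0 := by
              have : μ j = 0 := by omega
              rw [this, Nat.cast_zero]
            rw [hμj, mul_zero, zero_mul]
            apply Finset.sum_eq_zero
            intro b hb
            by_contra hne
            obtain ⟨hb2, _⟩ := hterm0 b hb hne
            have := DFunLike.congr_fun hb2 j
            rw [Finsupp.add_apply, he, Finsupp.single_apply, if_pos rfl] at this
            omega
        · have haj : a j = 0 := by rw [ha]; simp only; rw [if_neg hj2]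
          rw [haj, zero_mul, zero_mul]
          apply Finset.sum_eq_zero
          intro b hb
          by_contra hne
          obtain ⟨_, hb1⟩ := hterm0 b hb hne
          exact hj2 (hb1 ▸ le_add_self)
      rw [Finset.sum_congr rfl (fun j _ => hterm j), ← Finset.sum_mul] at h0
      rcases mul_eq_zero.1 h0 with h | h
      · exact h
      · exact absurd h (MvPolynomial.mem_support_iff.1 hμ)
    · -- degenerate case: μ istar = 0 and mstar istar = 0
      have h0 : μ istar = 0 ∧ mstar istar = 0 := by
        rw [he, Finsupp.single_le_iff, Finsupp.add_apply] at hA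
        omega
      apply Finset.sum_eq_zero
      intro j _
      by_cases hji : j = istar
      · subst hji
        rw [h0.1, Nat.cast_zero, mul_zero]
      · have haj : a j = 0 := by
          rw [ha]; simp only
          rw [if_neg]
          rw [he, Finsupp.single_le_iff, Finsupp.add_apply, Finsupp.single_apply,
            if_neg hji]
          omega
        rw [haj, zero_mul]
  -- now the dimension count
  let T := {g : Fin N → Fin (M + 1) // (∑ j, a j * ((g j : ℕ) : ℝ)) = 0}
  let Φ : MvPolynomial (Fin N) ℝ →ₗ[ℝ] (T → ℝ) :=
    { toFun := fun p g => coeff (Finsupp.equivFunOnFinite.symm (fun i => ((g.1 i : ℕ)))) p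
      map_add' := by intros; funext g; simp [coeff_add]
      map_smul' := by intros; funext g; simp [coeff_smul] }
  have hΦinj : Function.Injective (Φ.comp V.subtype) := by
    rw [← LinearMap.ker_eq_bot]
    rw [LinearMap.ker_eq_bot']
    intro x hx
    apply Subtype.ext
    simp only [ZeroMemClass.coe_zero]
    by_contra hp0
    obtain ⟨μ, hμ, hsum⟩ := main x.1 x.2 hp0
    have hbox := gamma_box (Submodule.mem_inf.1 x.2).1
    have hlt : ∀ i, μ i < M + 1 := fun i => Nat.lt_succ_of_le (hbox μ hμ i)
    set g : T := ⟨fun i => ⟨μ i, hlt i⟩, by simpa using hsum⟩ with hg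
    have hx2 : Φ.comp V.subtype x g = 0 := by rw [hx]; rfl
    have hcg : (Finsupp.equivFunOnFinite.symm (fun i => ((g.1 i : ℕ)))) = μ := by
      have h5 : (fun i => ((g.1 i : ℕ))) = ⇑μ := rfl
      rw [h5, Finsupp.equivFunOnFinite_symm_coe]
    have hzero : coeff μ (x : MvPolynomial (Fin N) ℝ) = 0 := by
      rw [← hcg]; exact hx2
    exact MvPolynomial.mem_support_iff.1 hμ hzero
  haveI : FiniteDimensional ℝ ↥V := FiniteDimensional.of_injective (Φ.comp V.subtype) hΦinj
  have h1 : Module.finrank ℝ ↥V ≤ Module.finrank ℝ (T → ℝ) :=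
    LinearMap.finrank_le_finrank_of_injective hΦinj
  have h2 : Module.finrank ℝ (T → ℝ) = Fintype.card T := Module.finrank_pi ℝ
  have hcard : Fintype.card T ≤ (M + 1) ^ (N - 1) := by
    have hembinj : Function.Injective
        (fun (g : T) => (fun (j : {j : Fin N // j ≠ istar}) => g.1 j.1)) := by
      intro g g' hgg
      have hjne : ∀ j : Fin N, ∀ hj : j ≠ istar, g.1 j = g'.1 j := fun j hj =>
        congrFun hgg ⟨j, hj⟩
      have hsplit : ∀ u : T, (a istar) * ((u.1 istar : ℕ) : ℝ)
          = - ∑ j ∈ Finset.univ.erase istar, a j * ((u.1 j : ℕ) : ℝ) := by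
        intro u
        have hu := u.2
        rw [← Finset.add_sum_erase _ _ (Finset.mem_univ istar)] at hu
        linarith
      have h6 : (∑ j ∈ Finset.univ.erase istar, a j * ((g.1 j : ℕ) : ℝ))
          = ∑ j ∈ Finset.univ.erase istar, a j * ((g'.1 j : ℕ) : ℝ) :=
        Finset.sum_congr rfl (fun j hj => by rw [hjne j (Finset.mem_erase.1 hj).1])
      have h7 : g.1 istar = g'.1 istar := by
        have h9 := hsplit g
        rw [h6, ← hsplit g'] at h9
        exact Fin.val_injective (Nat.cast_injective (mul_left_cancel₀ hastar h9))
      apply Subtype.ext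
      funext j
      by_cases hj : j = istar
      · subst hj; exact h7
      · exact hjne j hj
    calc Fintype.card T ≤ Fintype.card ({j : Fin N // j ≠ istar} → Fin (M + 1)) :=
        Fintype.card_le_of_injective _ hembinj
      _ = (M + 1) ^ (N - 1) := by
        rw [Fintype.card_fun, Fintype.card_fin]
        congr 1
        have h10 := Fintype.card_subtype_compl (fun j : Fin N => j = istar)
        simp [Fintype.card_subtype_eq] at h10
        simpa using h10
  exact ⟨‹FiniteDimensional ℝ ↥V›, by omega⟩

lemma no_dep {N M K : ℕ} (f : Fin K → MvPolynomial (Fin N) ℝ)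
    (hf : ∀ l, f l ∈ GammaMN N M) (hindep : LinearIndependent ℝ f)
    (hK : (M + 1) ^ (N - 1) < K)
    (c : Fin N → MvPolynomial (Fin N) ℝ) (i0 : Fin N) (hc : c i0 ≠ 0)
    (hdep : ∀ l, (∑ i, c i * (pderiv i (f l))) = 0) : False := by
  classical
  set V := GammaMN N M ⊓ LinearMap.ker (DOp c) with hV
  have hmem : ∀ l, f l ∈ V := fun l => Submodule.mem_inf.2
    ⟨hf l, LinearMap.mem_ker.2 (by rw [DOp_apply]; exact hdep l)⟩
  have hind' : LinearIndependent ℝ (fun l => (⟨f l, hmem l⟩ : ↥V)) :=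
    LinearIndependent.of_comp V.subtype hindep
  obtain ⟨hfd, hrank⟩ := ker_bound (M := M) c i0 hc
  rw [← hV] at hrank
  haveI : FiniteDimensional ℝ ↥V := hfd
  have hcard := hind'.fintype_card_le_finrank
  rw [Fintype.card_fin] at hcard
  omega

lemma rank_lt_of_mulVec_zero {n : ℕ} (A : Matrix (Fin n) (Fin n) ℝ) {w : Fin n → ℝ}
    (hw : w ≠ 0) (h : A.mulVec w = 0) : A.rank < n := by
  classical
  have hmem : w ∈ LinearMap.ker A.mulVecLin := by
    rw [LinearMap.mem_ker, Matrix.mulVecLin_apply]; exact h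
  have hrn : A.rank + Module.finrank ℝ (LinearMap.ker A.mulVecLin) = n := by
    have h2 := LinearMap.finrank_range_add_finrank_ker A.mulVecLin
    rwa [Module.finrank_pi, Fintype.card_fin] at h2
  have hkpos : 0 < Module.finrank ℝ (LinearMap.ker A.mulVecLin) := by
    rw [Module.finrank_pos_iff]
    exact ⟨⟨w, hmem⟩, 0, by simp [hw, Subtype.ext_iff]⟩
  omega

/-- If `f₁,…,f_K ∈ Γ^M_N` are linearly independent with
`K > max{N, (M+1)^{N-1}}`, then the vectors `D_{θ_1}f, …, D_{θ_N}f` are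
linearly independent, the polynomial `θ ↦ det(J(θ)ᵀ J(θ))` is not identically
zero, and `{θ : rank J(θ) ≤ N-1}` is nowhere dense in `ℝ^N`. -/
theorem jacobian_full_rank (N M K : ℕ)
    (f : Fin K → MvPolynomial (Fin N) ℝ)
    (hf : ∀ l, f l ∈ GammaMN N M)
    (hindep : LinearIndependent ℝ f)
    (hK : K > max N ((M + 1) ^ (N - 1))) :
    LinearIndependent ℝ
      (fun i : Fin N => fun l : Fin K => (pderiv i) (f l)) ∧
    ¬ (∀ θ : Fin N → ℝ,
        Matrix.det ((Matrix.of fun (l : Fin K) (i : Fin N) =>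
          eval θ ((pderiv i) (f l)))ᵀ
          * Matrix.of fun (l : Fin K) (i : Fin N) => eval θ ((pderiv i) (f l)))
        = 0) ∧
    IsNowhereDense {θ : Fin N → ℝ |
      Matrix.rank (Matrix.of fun (l : Fin K) (i : Fin N) =>
        eval θ ((pderiv i) (f l))) ≤ N - 1} := by
  classical
  have hK' : (M + 1) ^ (N - 1) < K := lt_of_le_of_lt (le_max_right N _) hK
  -- Part 1
  have part1 : LinearIndependent ℝ
      (fun i : Fin N => fun l : Fin K => (pderiv i) (f l)) := by
    rw [Fintype.linearIndependent_iff]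
    intro g hg
    by_contra hne
    push_neg at hne
    obtain ⟨i0, hi0⟩ := hne
    refine no_dep f hf hindep hK' (fun i => C (g i)) i0 ?_ ?_
    · simpa using hi0
    · intro l
      have h1 := congrFun hg l
      simp only [Finset.sum_apply, Pi.smul_apply, Pi.zero_apply] at h1
      calc (∑ i, C (g i) * (pderiv i (f l))) = ∑ i, g i • (pderiv i (f l)) := by
            refine Finset.sum_congr rfl fun i _ => ?_
            rw [smul_eq_C_mul]
        _ = 0 := h1
  -- the polynomial matrix and its Gram determinant
  set P : Matrix (Fin K) (Fin N) (MvPolynomial (Fin N) ℝ) :=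
    Matrix.of fun l i => (pderiv i) (f l) with hP
  set Q : MvPolynomial (Fin N) ℝ := (Pᵀ * P).det with hQ
  have hdet : ∀ θ : Fin N → ℝ,
      Matrix.det ((Matrix.of fun (l : Fin K) (i : Fin N) =>
          eval θ ((pderiv i) (f l)))ᵀ
        * Matrix.of fun (l : Fin K) (i : Fin N) => eval θ ((pderiv i) (f l)))
      = eval θ Q := by
    intro θ
    have hmap : (Matrix.of fun (l : Fin K) (i : Fin N) => eval θ ((pderiv i) (f l)))
        = P.map (eval θ) := rfl
    rw [hmap, ← Matrix.transpose_map, ← Matrix.map_mul, hQ, RingHom.map_det,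
      RingHom.mapMatrix_apply]
  -- Part 2
  have part2 : ¬ (∀ θ : Fin N → ℝ,
      Matrix.det ((Matrix.of fun (l : Fin K) (i : Fin N) =>
        eval θ ((pderiv i) (f l)))ᵀ
        * Matrix.of fun (l : Fin K) (i : Fin N) => eval θ ((pderiv i) (f l)))
      = 0) := by
    intro hall
    have hQ0 : Q = 0 := by
      apply MvPolynomial.funext
      intro θ
      rw [map_zero, ← hdet θ]
      exact hall θ
    obtain ⟨v, hv0, hvz⟩ := Matrix.exists_mulVec_eq_zero_iff.2 hQ0
    have hrow : ∀ i, (∑ j, ((Pᵀ * P) i j) * v j) = 0 := by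
      intro i
      have h3 := congrFun hvz i
      rwa [Matrix.mulVec, dotProduct] at h3
    have hPtP : ∀ i j, (Pᵀ * P) i j = ∑ l, P l i * P l j := by
      intro i j
      simp [Matrix.mul_apply, Matrix.transpose_apply]
    have hsq : (∑ l, (∑ i, v i * (P l i)) ^ 2) = 0 := by
      calc ∑ l, (∑ i, v i * P l i) ^ 2
          = ∑ l, ∑ i, ∑ j, (v i * P l i) * (v j * P l j) := by
            refine Finset.sum_congr rfl fun l _ => ?_
            rw [sq, Finset.sum_mul_sum]
        _ = ∑ i, ∑ j, (v i * v j) * ∑ l, P l i * P l j := by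
            rw [Finset.sum_comm]
            refine Finset.sum_congr rfl fun i _ => ?_
            rw [Finset.sum_comm]
            refine Finset.sum_congr rfl fun j _ => ?_
            rw [Finset.mul_sum]
            refine Finset.sum_congr rfl fun l _ => ?_
            ring
        _ = ∑ i, v i * (∑ j, ((Pᵀ * P) i j) * v j) := by
            refine Finset.sum_congr rfl fun i _ => ?_
            rw [Finset.mul_sum]
            refine Finset.sum_congr rfl fun j _ => ?_
            rw [hPtP]
            ring
        _ = 0 := by
            refine Finset.sum_eq_zero fun i _ => ?_
            rw [hrow i, mul_zero]
    have hzero : ∀ l, (∑ i, v i * ((pderiv i) (f l))) = 0 := by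
      intro l
      apply MvPolynomial.funext (q := 0)
      intro θ
      rw [map_zero]
      have h1 : (∑ l, (eval θ (∑ i, v i * P l i)) ^ 2) = 0 := by
        have h4 := congrArg (eval θ) hsq
        rw [map_sum, map_zero] at h4
        simpa [map_pow] using h4
      have h5 := (Finset.sum_eq_zero_iff_of_nonneg
        (fun l' _ => sq_nonneg (eval θ (∑ i, v i * P l' i)))).1 h1 l (Finset.mem_univ l)
      have h6 : eval θ (∑ i, v i * P l i) = 0 := by
        exact pow_eq_zero_iff (two_ne_zero) |>.1 h5
      simpa [hP] using h6
    obtain ⟨i0, hi0⟩ := Function.ne_iff.1 hv0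
    exact no_dep f hf hindep hK' v i0 (by simpa using hi0) hzero
  refine ⟨part1, part2, ?_⟩
  -- Part 3
  rcases Nat.eq_zero_or_pos N with hN0 | hNpos
  · exfalso
    subst hN0
    have hle : GammaMN 0 M ≤ Submodule.span ℝ {(1 : MvPolynomial (Fin 0) ℝ)} := by
      rw [GammaMN, Submodule.span_le]
      rintro q ⟨k, hk, rfl⟩
      have h7 : (∏ i : Fin 0, (X i : MvPolynomial (Fin 0) ℝ) ^ k i) = 1 := by simp
      rw [h7]
      exact Submodule.subset_span rfl
    have hmem : ∀ l, f l ∈ Submodule.span ℝ {(1 : MvPolynomial (Fin 0) ℝ)} :=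
      fun l => hle (hf l)
    have hind' : LinearIndependent ℝ
        (fun l => (⟨f l, hmem l⟩ : ↥(Submodule.span ℝ {(1 : MvPolynomial (Fin 0) ℝ)}))) :=
      LinearIndependent.of_comp (Submodule.span ℝ {(1 : MvPolynomial (Fin 0) ℝ)}).subtype hindep
    have hcard := hind'.fintype_card_le_finrank
    rw [Fintype.card_fin, finrank_span_singleton (one_ne_zero)] at hcard
    simp at hK
    omega
  · have hQne : Q ≠ 0 := by
      intro h
      apply part2
      intro θ
      rw [hdet θ, h, map_zero]
    have hSeq : {θ : Fin N → ℝ |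
        Matrix.rank (Matrix.of fun (l : Fin K) (i : Fin N) =>
          eval θ ((pderiv i) (f l))) ≤ N - 1}
        = (fun θ => eval θ Q) ⁻¹' {0} := by
      ext θ
      set Jθ : Matrix (Fin K) (Fin N) ℝ :=
        Matrix.of fun (l : Fin K) (i : Fin N) => eval θ ((pderiv i) (f l)) with hJ
      simp only [Set.mem_setOf_eq, Set.mem_preimage, Set.mem_singleton_iff]
      rw [← hdet θ, ← hJ]
      constructor
      · intro hrk
        by_contra hdne
        have hunit : IsUnit (Jθᵀ * Jθ) :=
          (Matrix.isUnit_iff_isUnit_det _).2 (isUnit_iff_ne_zero.2 hdne)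
        have hrkeq := Matrix.rank_of_isUnit _ hunit
        rw [Matrix.rank_transpose_mul_self, Fintype.card_fin] at hrkeq
        omega
      · intro hdz
        obtain ⟨w, hw0, hwz⟩ := Matrix.exists_mulVec_eq_zero_iff.2 hdz
        have hlt := rank_lt_of_mulVec_zero (Jθᵀ * Jθ) hw0 hwz
        rw [Matrix.rank_transpose_mul_self] at hlt
        omega
    rw [hSeq]
    have hclosed : IsClosed ((fun θ : Fin N → ℝ => eval θ Q) ⁻¹' {0}) :=
      isClosed_singleton.preimage (MvPolynomial.continuous_eval Q)
    rw [hclosed.isNowhereDense_iff]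
    by_contra hne
    obtain ⟨θ0, hθ0⟩ := Set.nonempty_iff_ne_empty.2 hne
    have hev : (fun θ : Fin N → ℝ => eval θ Q) =ᶠ[nhds θ0] 0 := by
      have h8 : (fun θ : Fin N → ℝ => eval θ Q) ⁻¹' {0} ∈ nhds θ0 :=
        mem_interior_iff_mem_nhds.1 hθ0
      filter_upwards [h8] with θ hθ
      simpa using hθ
    have han : AnalyticOnNhd ℝ (fun θ : Fin N → ℝ => eval θ Q) Set.univ :=
      AnalyticOnNhd.eval_mvPolynomial Q
    have heq0 := han.eqOn_zero_of_preconnected_of_eventuallyEq_zero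
      isPreconnected_univ (Set.mem_univ θ0) hev
    apply hQne
    apply MvPolynomial.funext (q := 0)
    intro θ
    have h9 := heq0 (Set.mem_univ θ)
    simpa using h9
end

section
/- Let f: ℝ^N → ℝ^N be C^1, θ† a point with f(θ†) = 0 and ∇f(θ†) invertible, and let (f_M) be C^1 maps with ‖f_M − f‖_∞ → 0 and ‖∇f_M − ∇f‖_∞ → 0 on [-1,1]^N, with θ† ∈ (-1,1)^N. Then for all large M there exist global minimizers θ*_M of Σ_i (f_M)_i^2 over [-1,1]^N with θ*_M → θ† and ‖f_M(θ*_M)‖ → 0. -/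
open Filter Metric

/-- N-dimensional convergence of approximate least-squares minimizers:
if `f : ℝ^N → ℝ^N` is `C¹`, `f(θ†) = 0` with `∇f(θ†)` invertible and
`θ† ∈ (-1,1)^N`, and `f_M → f`, `∇f_M → ∇f` uniformly on `[-1,1]^N`, then for
all large `M` there are global minimizers `θ*_M` of `Σᵢ (f_M)ᵢ²` over
`[-1,1]^N` with `θ*_M → θ†` and `‖f_M(θ*_M)‖ → 0`. -/
theorem multi_dim_ls_minimizer_convergence
    {N : ℕ}
    (f : EuclideanSpace ℝ (Fin N) → EuclideanSpace ℝ (Fin N))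
    (hf : ContDiff ℝ 1 f)
    (θd : EuclideanSpace ℝ (Fin N))
    (hθ : ∀ i, θd i ∈ Set.Ioo (-1 : ℝ) 1)
    (hroot : f θd = 0)
    (hinv : IsUnit (fderiv ℝ f θd).toLinearMap)
    (fM : ℕ → EuclideanSpace ℝ (Fin N) → EuclideanSpace ℝ (Fin N))
    (hfM : ∀ M, ContDiff ℝ 1 (fM M))
    (hconv : TendstoUniformlyOn fM f atTop
      {θ | ∀ i, θ i ∈ Set.Icc (-1 : ℝ) 1})
    (hconv' : TendstoUniformlyOn (fun M θ => fderiv ℝ (fM M) θ)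
      (fun θ => fderiv ℝ f θ) atTop {θ | ∀ i, θ i ∈ Set.Icc (-1 : ℝ) 1}) :
    ∃ (N₀ : ℕ) (θs : ℕ → EuclideanSpace ℝ (Fin N)),
      (∀ M ≥ N₀, (∀ i, θs M i ∈ Set.Icc (-1 : ℝ) 1) ∧
        IsMinOn (fun θ => ∑ i, (fM M θ i) ^ 2)
          {θ | ∀ i, θ i ∈ Set.Icc (-1 : ℝ) 1} (θs M)) ∧
      Tendsto θs atTop (nhds θd) ∧
      Tendsto (fun M => ‖fM M (θs M)‖) atTop (nhds 0) := by
  classical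
  set S : Set (EuclideanSpace ℝ (Fin N)) := {θ | ∀ i, θ i ∈ Set.Icc (-1 : ℝ) 1} with hSdef
  have hθdS : θd ∈ S := fun i => Set.Ioo_subset_Icc_self (hθ i)
  -- pointwise convergence at θd
  have hnorm0 : Tendsto (fun M => ‖fM M θd‖) atTop (nhds 0) := by
    have h1 : Tendsto (fun M => fM M θd) atTop (nhds (f θd)) := hconv.tendsto_at hθdS
    rw [hroot] at h1
    simpa using h1.norm
  by_cases hsub : Subsingleton (EuclideanSpace ℝ (Fin N))
  · refine ⟨0, fun _ => θd, fun M _ => ⟨fun i => Set.Ioo_subset_Icc_self (hθ i), ?_⟩,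
      tendsto_const_nhds, ?_⟩
    · intro θ _
      have : θ = θd := Subsingleton.elim _ _
      simp [this]
    · simpa using hnorm0
  have hnt : Nontrivial (EuclideanSpace ℝ (Fin N)) := not_subsingleton_iff_nontrivial.mp hsub
  -- the linear equivalence given by the derivative
  have hbij : Function.Bijective (fderiv ℝ f θd) := (Module.End.isUnit_iff _).mp hinv
  let eL := LinearEquiv.ofBijective (fderiv ℝ f θd).toLinearMap hbij
  let e : EuclideanSpace ℝ (Fin N) ≃L[ℝ] EuclideanSpace ℝ (Fin N) := eL.toContinuousLinearEquiv
  have heA : (e : EuclideanSpace ℝ (Fin N) →L[ℝ] EuclideanSpace ℝ (Fin N)) = fderiv ℝ f θd := by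
    ext x; rfl
  set κ : NNReal := ‖(e.symm : EuclideanSpace ℝ (Fin N) →L[ℝ] EuclideanSpace ℝ (Fin N))‖₊ with hκdef
  have hκ : κ ≠ 0 := by
    intro h
    have h0 : (e.symm : EuclideanSpace ℝ (Fin N) →L[ℝ] EuclideanSpace ℝ (Fin N)) = 0 :=
      nnnorm_eq_zero.mp h
    obtain ⟨x, hx⟩ := exists_ne (0 : EuclideanSpace ℝ (Fin N))
    apply hx
    have : e.symm (e x) = 0 := by rw [show e.symm (e x) = ((e.symm : _ →L[ℝ] _) (e x)) from rfl, h0]; rfl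
    simpa using this
  set c : NNReal := κ⁻¹ / 2 with hcdef
  have hκinv : (0 : NNReal) < κ⁻¹ := by positivity
  have hc : c < κ⁻¹ := NNReal.half_lt_self (ne_of_gt hκinv)
  have hcpos : (0 : ℝ) < (c : ℝ) / 2 := by
    have : (0:NNReal) < c := by rw [hcdef]; positivity
    positivity
  set δ : ℝ := (κ : ℝ)⁻¹ - c with hδdef
  have hδpos : 0 < δ := by
    rw [hδdef]
    have := hc
    rw [← NNReal.coe_lt_coe] at this
    simpa [sub_pos] using this
  -- choose the radius
  have hSopen : IsOpen {θ : EuclideanSpace ℝ (Fin N) | ∀ i, θ i ∈ Set.Ioo (-1:ℝ) 1} := by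
    have : {θ : EuclideanSpace ℝ (Fin N) | ∀ i, θ i ∈ Set.Ioo (-1:ℝ) 1}
        = ⋂ i, (fun θ : EuclideanSpace ℝ (Fin N) => θ i) ⁻¹' Set.Ioo (-1:ℝ) 1 := by
      ext; simp
    rw [this]
    exact isOpen_iInter_of_finite fun i => (isOpen_Ioo).preimage (by fun_prop)
  obtain ⟨r₀, hr₀pos, hr₀⟩ := Metric.isOpen_iff.mp hSopen θd (fun i => hθ i)
  have hcont : ContinuousAt (fun x => fderiv ℝ f x) θd :=
    (hf.continuous_fderiv one_ne_zero).continuousAt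
  obtain ⟨r₁, hr₁pos, hr₁⟩ := Metric.continuousAt_iff.mp hcont ((c:ℝ)/2) hcpos
  set r : ℝ := min (r₀ / 2) (r₁ / 2) with hrdef
  have hrpos : 0 < r := lt_min (by linarith) (by linarith)
  have hballS : closedBall θd r ⊆ S := by
    intro x hx
    have : x ∈ ball θd r₀ := by
      have : dist x θd ≤ r := mem_closedBall.mp hx
      exact mem_ball.mpr (lt_of_le_of_lt this (lt_of_le_of_lt (min_le_left _ _) (by linarith)))
    exact fun i => Set.Ioo_subset_Icc_self (hr₀ this i)
  have hball1 : closedBall θd r ⊆ ball θd r₁ := by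
    intro x hx
    have : dist x θd ≤ r := mem_closedBall.mp hx
    exact mem_ball.mpr (lt_of_le_of_lt this (lt_of_le_of_lt (min_le_right _ _) (by linarith)))
  set K : NNReal := (κ⁻¹ - c)⁻¹ with hKdef
  -- eventual root existence
  have hev1 : ∀ᶠ M in atTop, ∀ x ∈ S, dist (fderiv ℝ f x) (fderiv ℝ (fM M) x) < (c:ℝ)/2 :=
    Metric.tendstoUniformlyOn_iff.mp hconv' _ hcpos
  have hev2 : ∀ᶠ M in atTop, dist (f θd) (fM M θd) < δ * r := by
    have := Metric.tendstoUniformlyOn_iff.mp hconv _ (by positivity : (0:ℝ) < δ * r)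
    exact this.mono fun M h => h θd hθdS
  have hev : ∀ᶠ M in atTop, ∃ x, fM M x = 0 ∧ x ∈ closedBall θd r ∧
      dist x θd ≤ (K : ℝ) * ‖fM M θd‖ := by
    filter_upwards [hev1, hev2] with M h1 h2
    -- approximation property
    have happrox : ApproximatesLinearOn (fM M)
        (e : EuclideanSpace ℝ (Fin N) →L[ℝ] EuclideanSpace ℝ (Fin N)) (closedBall θd r) c := by
      intro x hx y hy
      have hbound : ∀ z ∈ closedBall θd r,
          ‖fderiv ℝ (fM M) z - (e : EuclideanSpace ℝ (Fin N) →L[ℝ] EuclideanSpace ℝ (Fin N))‖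
          ≤ (c : ℝ) := by
        intro z hz
        rw [heA]
        have hz1 : dist (fderiv ℝ f z) (fderiv ℝ (fM M) z) < (c:ℝ)/2 := h1 z (hballS hz)
        have hz2 : dist (fderiv ℝ f z) (fderiv ℝ f θd) < (c:ℝ)/2 := hr₁ (mem_ball.mp (hball1 hz))
        calc ‖fderiv ℝ (fM M) z - fderiv ℝ f θd‖
            ≤ ‖fderiv ℝ (fM M) z - fderiv ℝ f z‖ + ‖fderiv ℝ f z - fderiv ℝ f θd‖ :=
              norm_sub_le_norm_sub_add_norm_sub _ _ _
          _ ≤ (c:ℝ)/2 + (c:ℝ)/2 := by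
              refine add_le_add ?_ ?_
              · rw [← dist_eq_norm, dist_comm]; exact le_of_lt hz1
              · rw [← dist_eq_norm]; exact le_of_lt hz2
          _ = (c:ℝ) := by ring
      exact (convex_closedBall θd r).norm_image_sub_le_of_norm_fderiv_le'
        (fun z _ => ((hfM M).differentiable one_ne_zero).differentiableAt) hbound hy hx
    -- surjectivity gives a root
    have hsurj := happrox.surjOn_closedBall_of_nonlinearRightInverse
      e.toNonlinearRightInverse (le_of_lt hrpos) (Set.Subset.refl _)
    have hmem : (0 : EuclideanSpace ℝ (Fin N)) ∈
        closedBall (fM M θd) (((e.toNonlinearRightInverse.nnnorm : ℝ)⁻¹ - c) * r) := by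
      rw [mem_closedBall]
      have hnn : (e.toNonlinearRightInverse.nnnorm : ℝ) = (κ : ℝ) := rfl
      rw [hnn]
      have : dist (0 : EuclideanSpace ℝ (Fin N)) (fM M θd) = dist (f θd) (fM M θd) := by
        rw [hroot]
      rw [this]
      exact le_of_lt h2
    obtain ⟨x, hx, hfx⟩ := hsurj hmem
    refine ⟨x, hfx, hx, ?_⟩
    have hanti := happrox.antilipschitz (Or.inr hc)
    have hd : dist x θd ≤ (K : ℝ) * dist (fM M x) (fM M θd) := by
      have := hanti.le_mul_dist ⟨x, hx⟩ ⟨θd, mem_closedBall_self (le_of_lt hrpos)⟩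
      exact this
    calc dist x θd ≤ (K : ℝ) * dist (fM M x) (fM M θd) := hd
      _ = (K : ℝ) * ‖fM M θd‖ := by rw [hfx, dist_comm, dist_eq_norm, sub_zero]
  obtain ⟨N₀, hN₀⟩ := eventually_atTop.mp hev
  set θs : ℕ → EuclideanSpace ℝ (Fin N) := fun M =>
    if h : N₀ ≤ M then (hN₀ M h).choose else θd with hθsdef
  have hspec : ∀ M, N₀ ≤ M → fM M (θs M) = 0 ∧ θs M ∈ closedBall θd r ∧
      dist (θs M) θd ≤ (K : ℝ) * ‖fM M θd‖ := by
    intro M h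
    have := (hN₀ M h).choose_spec
    simpa [hθsdef, dif_pos h] using this
  refine ⟨N₀, θs, ?_, ?_, ?_⟩
  · intro M hM
    obtain ⟨hz, hmem, _⟩ := hspec M hM
    refine ⟨fun i => (hballS hmem) i, ?_⟩
    intro θ _
    simp only [Set.mem_setOf_eq, hz]
    have : ∑ i, ((0 : EuclideanSpace ℝ (Fin N)) i) ^ 2 = 0 := by simp
    rw [this]
    positivity
  · rw [tendsto_iff_dist_tendsto_zero]
    refine squeeze_zero' (g := fun M => (K : ℝ) * ‖fM M θd‖) (Eventually.of_forall fun M => dist_nonneg) ?_ ?_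
    · exact eventually_atTop.mpr ⟨N₀, fun M hM => (hspec M hM).2.2⟩
    · simpa using hnorm0.const_mul (K : ℝ)
  · refine Tendsto.congr' ?_ tendsto_const_nhds
    filter_upwards [eventually_atTop.mpr ⟨N₀, fun M hM => (hspec M hM).1⟩] with M h
    simp [h]
end
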